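/- arXiv:1402.2615 — 2 statements merged into one kernel-verified Lean document; each statement's English description precedes it below -/
import Mathlib

section
/- Let Ω ⊂ ℂ be an open bounded set and let k ≥ 2 be an integer. Let f : ℂ → ℂ be k times continuously differentiable (in the real sense) on the closure of Ω. Define u(z) = (1/π) ∫_Ω f(ζ) · ((z − ζ)/conj(z − ζ)) dA(ζ), where dA is the Lebesgue area measure on ℂ. Then u is k times continuously differentiable on Ω and satisfies ∂_z² u(z) = f(z) for all z ∈ Ω. -/
open MeasureTheory Complex Set Metric Filter
open scoped Convolution Real Topology

/-- Wirtinger derivative `∂_z w = (1/2)(∂w/∂x - i ∂w/∂y)`, where the partial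
derivatives are real directional derivatives in the directions `1` and `i`. -/
noncomputable def dz (w : ℂ → ℂ) (z : ℂ) : ℂ :=
  (1 / 2 : ℂ) * (fderiv ℝ w z 1 - Complex.I * fderiv ℝ w z Complex.I)

namespace Stmt1

noncomputable def K (w : ℂ) : ℂ := w / (starRingEnd ℂ) w
noncomputable def K1 (w : ℂ) : ℂ := ((starRingEnd ℂ) w)⁻¹
noncomputable abbrev L : ℂ →L[ℝ] ℂ →L[ℝ] ℂ := ContinuousLinearMap.mul ℝ ℂ


lemma norm_K_le (w : ℂ) : ‖K w‖ ≤ 1 := by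
  rcases eq_or_ne w 0 with rfl | hw
  · simp [K]
  · simp only [K, norm_div, RCLike.norm_conj]
    rw [div_self (by simpa using hw)]

lemma measurable_K : Measurable K :=
  measurable_id.div (Complex.continuous_conj.measurable)

lemma locallyIntegrable_K : LocallyIntegrable K := by
  refine locallyIntegrable_iff.2 fun k hk => ?_
  exact Measure.integrableOn_of_bounded hk.measure_lt_top.ne
    measurable_K.aestronglyMeasurable (ae_of_all _ fun x => norm_K_le x)

lemma dz_congr_nhds {u v : ℂ → ℂ} {z : ℂ} (h : u =ᶠ[nhds z] v) : dz u z = dz v z := by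
  unfold dz; rw [h.fderiv_eq]

lemma contDiff_dz {q : ℂ → ℂ} {n : ℕ∞} (hq : ContDiff ℝ (n + 1) q) :
    ContDiff ℝ n (dz q) := by
  have h1 : ContDiff ℝ n (fderiv ℝ q) := hq.fderiv_right le_rfl
  exact contDiff_const.mul ((h1.clm_apply contDiff_const).sub
    (contDiff_const.mul (h1.clm_apply contDiff_const)))

lemma hasCompactSupport_dz {q : ℂ → ℂ} (hq : HasCompactSupport q) :
    HasCompactSupport (dz q) := by
  have := hq.fderiv ℝ
  refine this.comp_left (g := fun (l : ℂ →L[ℝ] ℂ) => (1/2 : ℂ) * (l 1 - Complex.I * l Complex.I)) ?_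
  simp

lemma dz_const_mul_add {v w : ℂ → ℂ} {z : ℂ} (c : ℂ)
    (hv : DifferentiableAt ℝ v z) (hw : DifferentiableAt ℝ w z) :
    dz (fun z => c * (v z + w z)) z = c * (dz v z + dz w z) := by
  have h1 : fderiv ℝ (fun z => c * (v z + w z)) z = c • (fderiv ℝ v z + fderiv ℝ w z) := by
    rw [fderiv_const_mul (hv.fun_add hw), fderiv_fun_add hv hw]
  unfold dz
  rw [h1]
  simp only [ContinuousLinearMap.smul_apply, ContinuousLinearMap.add_apply, smul_eq_mul]
  ring

lemma hasFDerivAt_conj (w : ℂ) :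
    HasFDerivAt (fun z : ℂ => (starRingEnd ℂ) z) (Complex.conjCLE.toContinuousLinearMap) w := by
  exact Complex.conjCLE.hasFDerivAt (x := w)

lemma hasFDerivAt_K1 {w : ℂ} (hw : w ≠ 0) :
    HasFDerivAt K1
      ((((1 : ℂ →L[ℂ] ℂ).smulRight (-((starRingEnd ℂ) w ^ 2)⁻¹)).restrictScalars ℝ).comp
        Complex.conjCLE.toContinuousLinearMap) w := by
  have hcw : (starRingEnd ℂ) w ≠ 0 := by simpa using hw
  have h1 : HasFDerivAt (fun y : ℂ => y⁻¹)
      (((1 : ℂ →L[ℂ] ℂ).smulRight (-((starRingEnd ℂ) w ^ 2)⁻¹)).restrictScalars ℝ)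
      ((starRingEnd ℂ) w) :=
    (hasDerivAt_inv hcw).hasFDerivAt.restrictScalars ℝ
  exact h1.comp w (hasFDerivAt_conj w)

lemma K1_deriv_apply {w : ℂ} (hw : w ≠ 0) (v : ℂ) :
    fderiv ℝ K1 w v = -((starRingEnd ℂ) w ^ 2)⁻¹ * (starRingEnd ℂ) v := by
  rw [(hasFDerivAt_K1 hw).fderiv]
  simp [smul_eq_mul, mul_comm]

lemma dzK1 {w : ℂ} (hw : w ≠ 0) : dz K1 w = 0 := by
  unfold dz
  rw [K1_deriv_apply hw 1, K1_deriv_apply hw Complex.I]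
  simp
  ring_nf
  rw [Complex.I_sq]
  ring

lemma hasFDerivAt_K {w : ℂ} (hw : w ≠ 0) :
    HasFDerivAt K
      (K1 w • ContinuousLinearMap.id ℝ ℂ +
        (w * -(((starRingEnd ℂ) w ^ 2)⁻¹)) • Complex.conjCLE.toContinuousLinearMap) w := by
  have h1 : HasFDerivAt (fun z : ℂ => z * K1 z)
      (w • ((((1 : ℂ →L[ℂ] ℂ).smulRight (-((starRingEnd ℂ) w ^ 2)⁻¹)).restrictScalars ℝ).comp
        Complex.conjCLE.toContinuousLinearMap) + (ContinuousLinearMap.id ℝ ℂ).smulRight (K1 w)) w := by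
    exact (hasFDerivAt_id w).fun_mul' (hasFDerivAt_K1 hw)
  have h2 : K = fun z : ℂ => z * K1 z := by
    funext z; simp [K, K1, div_eq_mul_inv]
  rw [h2]
  convert h1 using 1
  ext v
  simp [smul_eq_mul]
  ring

lemma K_deriv_apply {w : ℂ} (hw : w ≠ 0) (v : ℂ) :
    fderiv ℝ K w v = K1 w * v + (w * -(((starRingEnd ℂ) w ^ 2)⁻¹)) * (starRingEnd ℂ) v := by
  rw [(hasFDerivAt_K hw).fderiv]
  simp [smul_eq_mul]

lemma dzK {w : ℂ} (hw : w ≠ 0) : dz K w = K1 w := by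
  unfold dz
  rw [K_deriv_apply hw 1, K_deriv_apply hw Complex.I]
  have hcw : (starRingEnd ℂ) w ≠ 0 := by simpa using hw
  simp [K1]
  field_simp
  ring_nf
  rw [Complex.I_sq]
  ring

lemma hasCompactSupport_fderiv_apply {q : ℂ → ℂ} (hq : HasCompactSupport q) (v : ℂ) :
    HasCompactSupport (fun a => fderiv ℝ q a v) :=
  (hq.fderiv ℝ).comp_left (g := fun (l : ℂ →L[ℝ] ℂ) => l v) rfl

lemma dz_conv {p q : ℂ → ℂ} (hp : LocallyIntegrable p volume) (hq : ContDiff ℝ 1 q)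
    (hcq : HasCompactSupport q) (z : ℂ) :
    dz (p ⋆[L] q) z = (p ⋆[L] dz q) z := by
  have hfd := hcq.hasFDerivAt_convolution_right L hp hq z
  have hfderiv : fderiv ℝ (p ⋆[L] q) z = (p ⋆[L.precompR ℂ] fderiv ℝ q) z := hfd.fderiv
  have happ : ∀ v : ℂ, (p ⋆[L.precompR ℂ] fderiv ℝ q) z v
      = (p ⋆[L] fun a => fderiv ℝ q a v) z :=
    fun v => convolution_precompR_apply L hp (hcq.fderiv ℝ)
      (hq.continuous_fderiv one_ne_zero) z v
  have hconv : ∀ v : ℂ, (p ⋆[L] fun a => fderiv ℝ q a v) z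
      = ∫ t, p t * fderiv ℝ q (z - t) v := by
    intro v; rfl
  have hint : ∀ v : ℂ, Integrable (fun t => p t * fderiv ℝ q (z - t) v) volume := by
    intro v
    have := (hasCompactSupport_fderiv_apply hcq v).convolutionExists_right L hp
      (((hq.continuous_fderiv one_ne_zero).clm_apply continuous_const)) z
    exact this
  have hrhs : (p ⋆[L] dz q) z = ∫ t, p t * dz q (z - t) := rfl
  have hsplit : (fun t => p t * dz q (z - t)) = fun t =>
      (1/2 : ℂ) * (p t * fderiv ℝ q (z - t) 1)
        - (1/2 * Complex.I : ℂ) * (p t * fderiv ℝ q (z - t) Complex.I) := by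
    funext t; unfold dz; ring
  rw [hrhs, hsplit, integral_sub ((hint 1).const_mul _) ((hint Complex.I).const_mul _),
    integral_const_mul, integral_const_mul]
  unfold dz
  rw [hfderiv, happ 1, happ Complex.I, hconv 1, hconv Complex.I]
  ring

/-- `exp (θ i)` -/
noncomputable def cc (θ : ℝ) : ℂ := Complex.exp (θ * Complex.I)

lemma cc_eq (θ : ℝ) : cc θ = (Real.cos θ : ℂ) + (Real.sin θ : ℂ) * Complex.I := by
  rw [cc, Complex.exp_mul_I, Complex.ofReal_cos, Complex.ofReal_sin]

lemma continuous_cc : Continuous cc :=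
  Complex.continuous_exp.comp (Complex.continuous_ofReal.mul continuous_const)

lemma cc_hasDerivAt (θ : ℝ) : HasDerivAt cc (Complex.I * cc θ) θ := by
  have h1 : HasDerivAt (fun θ : ℝ => (θ : ℂ) * Complex.I) Complex.I θ := by
    simpa using (HasDerivAt.ofReal_comp (hasDerivAt_id θ)).mul_const Complex.I
  have h2 := h1.cexp
  show HasDerivAt (fun θ : ℝ => Complex.exp (θ * Complex.I)) (Complex.I * Complex.exp (θ * Complex.I)) θ
  simpa [mul_comm] using h2

lemma cc_conj (θ : ℝ) : (starRingEnd ℂ) (cc θ) = cc (-θ) := by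
  rw [cc, cc, ← Complex.exp_conj]
  congr 1
  simp

lemma cc_mul_neg (θ : ℝ) : cc θ * cc (-θ) = 1 := by
  rw [cc, cc, ← Complex.exp_add]
  simp

lemma cc_ne_zero (θ : ℝ) : cc θ ≠ 0 := Complex.exp_ne_zero _

lemma cc_pi : cc π = -1 := by simpa [cc] using Complex.exp_pi_mul_I

lemma cc_neg_pi : cc (-π) = -1 := by
  have := cc_mul_neg π
  rw [cc_pi] at this
  linear_combination -this

lemma polar_symm (p : ℝ × ℝ) : (Complex.polarCoord.symm p : ℂ) = (p.1 : ℂ) * cc p.2 := by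
  rw [Complex.polarCoord_symm_apply, cc_eq]

lemma Kc {r : ℝ} (hr : r ≠ 0) (θ : ℝ) : K ((r : ℂ) * cc θ) = cc θ ^ 2 := by
  have hrc : (r : ℂ) ≠ 0 := by exact_mod_cast hr
  rw [K, map_mul, cc_conj, Complex.conj_ofReal, mul_div_mul_left _ _ hrc]
  rw [div_eq_iff (by simpa using cc_ne_zero (-θ))]
  have h := cc_mul_neg θ
  linear_combination (-(cc θ)) * h

lemma K1c {r : ℝ} (hr : r ≠ 0) (θ : ℝ) : K1 ((r : ℂ) * cc θ) = (r : ℂ)⁻¹ * cc θ := by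
  have hrc : (r : ℂ) ≠ 0 := by exact_mod_cast hr
  rw [K1, map_mul, cc_conj, Complex.conj_ofReal, mul_inv]
  congr 1
  rw [inv_eq_iff_eq_inv, eq_comm, inv_eq_of_mul_eq_one_left ?_]
  rw [mul_comm]
  exact cc_mul_neg θ

/-- directional expansion for real-linear maps on ℂ -/
lemma clm_dir (A : ℂ →L[ℝ] ℂ) (θ : ℝ) :
    A (cc θ) = (Real.cos θ : ℂ) * A 1 + (Real.sin θ : ℂ) * A Complex.I := by
  have h : cc θ = (Real.cos θ : ℝ) • (1 : ℂ) + (Real.sin θ : ℝ) • (Complex.I) := by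
    rw [cc_eq]; simp [Complex.real_smul]
  rw [h, map_add, ContinuousLinearMap.map_smul, ContinuousLinearMap.map_smul, Complex.real_smul, Complex.real_smul]

lemma clm_dir_I (A : ℂ →L[ℝ] ℂ) (θ : ℝ) :
    A (Complex.I * cc θ) = -(Real.sin θ : ℂ) * A 1 + (Real.cos θ : ℂ) * A Complex.I := by
  have h : Complex.I * cc θ = (-Real.sin θ : ℝ) • (1 : ℂ) + (Real.cos θ : ℝ) • (Complex.I) := by
    rw [cc_eq]; simp only [Complex.real_smul, Complex.ofReal_neg]
    linear_combination (Real.sin θ : ℂ) * Complex.I_sq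
  rw [h, map_add, ContinuousLinearMap.map_smul, ContinuousLinearMap.map_smul,
    Complex.real_smul, Complex.real_smul, Complex.ofReal_neg]

section Fcalc

variable (q : ℂ → ℂ) (z : ℂ)

/-- `F r θ = q (z - r e^{iθ})` -/
noncomputable def Ff (r θ : ℝ) : ℂ := q (z - (r : ℂ) * cc θ)
/-- `∂F/∂r` -/
noncomputable def Fr (r θ : ℝ) : ℂ := -(fderiv ℝ q (z - (r : ℂ) * cc θ) (cc θ))
/-- `(1/r) ∂F/∂θ` -/
noncomputable def Ft (r θ : ℝ) : ℂ := -(fderiv ℝ q (z - (r : ℂ) * cc θ) (Complex.I * cc θ))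

variable {q}

lemma hasDerivAt_Ff_r (hq : ContDiff ℝ 1 q) (r θ : ℝ) :
    HasDerivAt (fun r => Ff q z r θ) (Fr q z r θ) r := by
  have hγ : HasDerivAt (fun r : ℝ => z - (r : ℂ) * cc θ) (-(cc θ)) r := by
    have h1 : HasDerivAt (fun r : ℝ => (r : ℂ) * cc θ) (cc θ) r := by
      simpa using (HasDerivAt.ofReal_comp (hasDerivAt_id r)).mul_const (cc θ)
    simpa using h1.const_sub z
  have hd : HasFDerivAt q (fderiv ℝ q (z - (r : ℂ) * cc θ)) (z - (r : ℂ) * cc θ) :=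
    (hq.differentiable one_ne_zero _).hasFDerivAt
  have := hd.comp_hasDerivAt r hγ
  simpa [Ff, Fr, map_neg, Function.comp_def] using this

lemma hasDerivAt_Ff_θ (hq : ContDiff ℝ 1 q) (r θ : ℝ) :
    HasDerivAt (fun θ => Ff q z r θ) ((r : ℂ) * Ft q z r θ) θ := by
  have hγ : HasDerivAt (fun θ : ℝ => z - (r : ℂ) * cc θ) (-((r : ℂ) * (Complex.I * cc θ))) θ := by
    have h1 : HasDerivAt (fun θ : ℝ => (r : ℂ) * cc θ) ((r : ℂ) * (Complex.I * cc θ)) θ :=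
      (cc_hasDerivAt θ).const_mul _
    simpa using h1.const_sub z
  have hd : HasFDerivAt q (fderiv ℝ q (z - (r : ℂ) * cc θ)) (z - (r : ℂ) * cc θ) :=
    (hq.differentiable one_ne_zero _).hasFDerivAt
  have h2 := hd.comp_hasDerivAt θ hγ
  have h3 : fderiv ℝ q (z - (r : ℂ) * cc θ) (-((r : ℂ) * (Complex.I * cc θ)))
      = (r : ℂ) * Ft q z r θ := by
    have hsm : -((r : ℂ) * (Complex.I * cc θ)) = (-r : ℝ) • (Complex.I * cc θ) := by
      simp [Complex.real_smul]
    rw [hsm, ContinuousLinearMap.map_smul, Complex.real_smul, Ft]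
    push_cast
    ring
  rw [← h3]
  exact h2

lemma continuous_Ff (hq : ContDiff ℝ 1 q) :
    Continuous (fun p : ℝ × ℝ => Ff q z p.1 p.2) := by
  apply hq.continuous.comp
  exact continuous_const.sub ((Complex.continuous_ofReal.comp continuous_fst).mul
    (continuous_cc.comp continuous_snd))

lemma continuous_γ : Continuous (fun p : ℝ × ℝ => z - (p.1 : ℂ) * cc p.2) :=
  continuous_const.sub ((Complex.continuous_ofReal.comp continuous_fst).mul
    (continuous_cc.comp continuous_snd))

lemma continuous_Fr (hq : ContDiff ℝ 1 q) :
    Continuous (fun p : ℝ × ℝ => Fr q z p.1 p.2) := by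
  apply Continuous.neg
  exact ((hq.continuous_fderiv one_ne_zero).comp (continuous_γ z)).clm_apply
    (continuous_cc.comp continuous_snd)

lemma continuous_Ft (hq : ContDiff ℝ 1 q) :
    Continuous (fun p : ℝ × ℝ => Ft q z p.1 p.2) := by
  apply Continuous.neg
  exact ((hq.continuous_fderiv one_ne_zero).comp (continuous_γ z)).clm_apply
    (continuous_const.mul (continuous_cc.comp continuous_snd))

/-- pointwise identity for the kernel `K` -/
lemma P1 (hq : ContDiff ℝ 1 q) {r : ℝ} (hr : r ≠ 0) (θ : ℝ) :
    r • (K ((r : ℂ) * cc θ) * dz q (z - (r : ℂ) * cc θ))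
      = -(1/2 : ℂ) * cc θ * ((r : ℂ) * Fr q z r θ - Complex.I * ((r : ℂ) * Ft q z r θ)) := by
  rw [Kc hr θ]
  unfold dz Fr Ft
  rw [clm_dir, clm_dir_I]
  rw [Complex.real_smul]
  set a := fderiv ℝ q (z - (r : ℂ) * cc θ) 1 with ha
  set b := fderiv ℝ q (z - (r : ℂ) * cc θ) Complex.I with hb
  rw [cc_eq]
  linear_combination (-(1/2 : ℂ) * (r : ℂ) * (Real.sin θ : ℂ) * b *
    ((Real.cos θ : ℂ) + (Real.sin θ : ℂ) * Complex.I)) * Complex.I_sq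

/-- pointwise identity for the kernel `K1` against `q` itself -/
lemma P1' {r : ℝ} (hr : r ≠ 0) (θ : ℝ) :
    r • (K1 ((r : ℂ) * cc θ) * q (z - (r : ℂ) * cc θ)) = cc θ * Ff q z r θ := by
  have hrc : (r : ℂ) ≠ 0 := by exact_mod_cast hr
  rw [K1c hr θ, Complex.real_smul, Ff]
  field_simp

/-- pointwise identity for the kernel `K1` against `dz q` -/
lemma P2 (hq : ContDiff ℝ 1 q) {r : ℝ} (hr : r ≠ 0) (θ : ℝ) :
    r • (K1 ((r : ℂ) * cc θ) * dz q (z - (r : ℂ) * cc θ))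
      = -(1/2 : ℂ) * Fr q z r θ + (1/2 : ℂ) * Complex.I * Ft q z r θ := by
  have hrc : (r : ℂ) ≠ 0 := by exact_mod_cast hr
  rw [K1c hr θ, Complex.real_smul]
  have hr1 : ∀ X : ℂ, (r : ℂ) * ((r : ℂ)⁻¹ * cc θ * X) = cc θ * X := by
    intro X
    rw [show (r : ℂ) * ((r : ℂ)⁻¹ * cc θ * X) = ((r : ℂ) * (r : ℂ)⁻¹) * (cc θ * X) by ring,
      mul_inv_cancel₀ hrc, one_mul]
  rw [hr1]
  unfold dz Fr Ft
  rw [clm_dir, clm_dir_I]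
  set a := fderiv ℝ q (z - (r : ℂ) * cc θ) 1 with ha
  set b := fderiv ℝ q (z - (r : ℂ) * cc θ) Complex.I with hb
  rw [cc_eq]
  linear_combination (-(1/2 : ℂ) * (Real.sin θ : ℂ) * b) * Complex.I_sq

end Fcalc

section IntHelpers

/-- 1-d integrability of continuous functions vanishing at large argument -/
lemma integrableOn_Ioi_of_vanish {g : ℝ → ℂ} (hg : Continuous g) {R : ℝ} (hR : 0 ≤ R)
    (hvan : ∀ r, R ≤ r → g r = 0) : IntegrableOn g (Set.Ioi (0:ℝ)) := by
  have h1 : IntegrableOn g (Set.Ioc 0 R) :=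
    (hg.integrableOn_Icc (a := 0) (b := R)).mono_set Set.Ioc_subset_Icc_self
  have h2 : IntegrableOn g (Set.Ioi R) := by
    refine (integrableOn_zero (ε' := ℂ)).congr_fun (fun r hr => (hvan r (le_of_lt hr)).symm)
      measurableSet_Ioi
  have h3 : IntegrableOn g (Set.Ioc 0 R ∪ Set.Ioi R) := h1.union h2
  exact h3.mono_set (by rw [Set.Ioc_union_Ioi_eq_Ioi hR])

/-- 2-d integrability over the polar target of continuous functions vanishing
at large radius -/
lemma integrableOn_target_of_vanish {g : ℝ × ℝ → ℂ} (hg : Continuous g) {R : ℝ} (hR : 0 ≤ R)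
    (hvan : ∀ p : ℝ × ℝ, R ≤ p.1 → g p = 0) :
    IntegrableOn g (Set.Ioi (0:ℝ) ×ˢ Set.Ioo (-π) π) := by
  have h1 : IntegrableOn g (Set.Icc 0 R ×ˢ Set.Icc (-π) π) :=
    hg.continuousOn.integrableOn_compact (isCompact_Icc.prod isCompact_Icc)
  have h2 : IntegrableOn g (Set.Ioi R ×ˢ (Set.univ : Set ℝ)) := by
    refine (integrableOn_zero (ε' := ℂ)).congr_fun
      (fun p hp => (hvan p (le_of_lt hp.1)).symm)
      (measurableSet_Ioi.prod MeasurableSet.univ)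
  refine (h1.union h2).mono_set ?_
  rintro ⟨r, θ⟩ ⟨hr, hθ⟩
  rcases le_or_gt r R with h | h
  · exact Or.inl ⟨⟨le_of_lt hr, h⟩, ⟨le_of_lt hθ.1, le_of_lt hθ.2⟩⟩
  · exact Or.inr ⟨h, trivial⟩

lemma restrict_prod_eq (s t : Set ℝ) :
    (volume : Measure (ℝ × ℝ)).restrict (s ×ˢ t)
      = ((volume : Measure ℝ).restrict s).prod ((volume : Measure ℝ).restrict t) := by
  rw [Measure.prod_restrict, ← Measure.volume_eq_prod]

lemma iterated_int {g : ℝ × ℝ → ℂ} {s t : Set ℝ}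
    (hg : IntegrableOn g (s ×ˢ t)) :
    (∫ p in s ×ˢ t, g p) = ∫ x in s, ∫ y in t, g (x, y) := by
  rw [show (∫ p in s ×ˢ t, g p) = ∫ p, g p ∂(((volume : Measure ℝ).restrict s).prod
      ((volume : Measure ℝ).restrict t)) by rw [← restrict_prod_eq]]
  refine integral_prod g ?_
  rw [← restrict_prod_eq]
  exact hg

lemma iterated_int_symm {g : ℝ × ℝ → ℂ} {s t : Set ℝ}
    (hg : IntegrableOn g (s ×ˢ t)) :
    (∫ p in s ×ˢ t, g p) = ∫ y in t, ∫ x in s, g (x, y) := by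
  rw [show (∫ p in s ×ˢ t, g p) = ∫ p, g p ∂(((volume : Measure ℝ).restrict s).prod
      ((volume : Measure ℝ).restrict t)) by rw [← restrict_prod_eq]]
  refine integral_prod_symm g ?_
  rw [← restrict_prod_eq]
  exact hg

end IntHelpers

section Jlemmas

variable {q : ℂ → ℂ} (z : ℂ)

lemma norm_cc (θ : ℝ) : ‖cc θ‖ = 1 := by
  simpa [cc] using Complex.abs_exp_ofReal_mul_I θ

lemma exists_R (hcq : HasCompactSupport q) (z : ℂ) :
    ∃ R : ℝ, 0 ≤ R ∧ ∀ (r θ : ℝ), R ≤ r → (z - (r : ℂ) * cc θ) ∉ tsupport q := by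
  obtain ⟨M, hM⟩ := hcq.isBounded.subset_closedBall 0
  refine ⟨max M 0 + ‖z‖ + 1, by positivity, fun r θ hr hmem => ?_⟩
  have h1 : ‖z - (r : ℂ) * cc θ‖ ≤ M := by simpa using mem_closedBall_zero_iff.1 (hM hmem)
  have h2 : ‖(r : ℂ) * cc θ‖ - ‖z‖ ≤ ‖z - (r : ℂ) * cc θ‖ := by
    have := norm_sub_norm_le ((r : ℂ) * cc θ) z
    have h3 : ‖(r : ℂ) * cc θ - z‖ = ‖z - (r : ℂ) * cc θ‖ := norm_sub_rev _ _
    linarith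
  have h4 : ‖(r : ℂ) * cc θ‖ = |r| := by
    rw [norm_mul, norm_cc, mul_one, Complex.norm_real, Real.norm_eq_abs]
  have h5 : 0 ≤ r := le_trans (by positivity) hr
  rw [h4, _root_.abs_of_nonneg h5] at h2
  have : max M 0 ≤ M := by linarith
  have : M ≤ max M 0 := le_max_left M 0
  linarith

lemma Ff_vanish {r θ : ℝ} (hn : (z - (r : ℂ) * cc θ) ∉ tsupport q) : Ff q z r θ = 0 := by
  rw [Ff]; exact image_eq_zero_of_notMem_tsupport hn

lemma fderiv_vanish {r θ : ℝ} (hn : (z - (r : ℂ) * cc θ) ∉ tsupport q) :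
    fderiv ℝ q (z - (r : ℂ) * cc θ) = 0 := by
  by_contra h
  exact hn (support_fderiv_subset ℝ (by simpa [Function.mem_support] using h))

lemma Fr_vanish {r θ : ℝ} (hn : (z - (r : ℂ) * cc θ) ∉ tsupport q) : Fr q z r θ = 0 := by
  rw [Fr, fderiv_vanish z hn]; simp

lemma Ft_vanish {r θ : ℝ} (hn : (z - (r : ℂ) * cc θ) ∉ tsupport q) : Ft q z r θ = 0 := by
  rw [Ft, fderiv_vanish z hn]; simp

lemma continuous_Ff_r (hq : ContDiff ℝ 1 q) (θ : ℝ) :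
    Continuous (fun r => Ff q z r θ) :=
  (continuous_Ff z hq).comp (continuous_id.prodMk continuous_const)

lemma continuous_Fr_r (hq : ContDiff ℝ 1 q) (θ : ℝ) :
    Continuous (fun r => Fr q z r θ) :=
  (continuous_Fr z hq).comp (continuous_id.prodMk continuous_const)

lemma J1 (hq : ContDiff ℝ 1 q) (hcq : HasCompactSupport q) (θ : ℝ) :
    ∫ r in Set.Ioi (0:ℝ), (Complex.ofReal r * Fr q z r θ) = -∫ r in Set.Ioi (0:ℝ), Ff q z r θ := by
  obtain ⟨R, hR0, hRn⟩ := exists_R hcq z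
  have hd : ∀ r : ℝ, HasDerivAt (fun r : ℝ => (r:ℂ) * Ff q z r θ)
      (Ff q z r θ + (r:ℂ) * Fr q z r θ) r := by
    intro r
    have h1 : HasDerivAt (fun r : ℝ => (r:ℂ)) 1 r := HasDerivAt.ofReal_comp (hasDerivAt_id r)
    simpa using h1.fun_mul (hasDerivAt_Ff_r z hq r θ)
  have hint1 : IntegrableOn (fun r => Ff q z r θ) (Set.Ioi (0:ℝ)) :=
    integrableOn_Ioi_of_vanish (continuous_Ff_r z hq θ) hR0
      (fun r hr => Ff_vanish z (hRn r θ hr))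
  have hint2 : IntegrableOn (fun r : ℝ => (r:ℂ) * Fr q z r θ) (Set.Ioi (0:ℝ)) :=
    integrableOn_Ioi_of_vanish (Complex.continuous_ofReal.mul (continuous_Fr_r z hq θ)) hR0
      (fun r hr => by rw [Fr_vanish z (hRn r θ hr), mul_zero])
  have htend : Tendsto (fun r : ℝ => (r:ℂ) * Ff q z r θ) atTop (nhds 0) := by
    refine tendsto_const_nhds.congr' ?_
    filter_upwards [eventually_ge_atTop R] with r hr
    rw [Ff_vanish z (hRn r θ hr), mul_zero]
  have hFTC := integral_Ioi_of_hasDerivAt_of_tendsto' (f' := fun r => Ff q z r θ + (r:ℂ) * Fr q z r θ)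
    (fun r _ => hd r) (hint1.add hint2) htend
  rw [integral_add hint1 hint2] at hFTC
  simp only [Complex.ofReal_zero, zero_mul, sub_zero, zero_sub, neg_zero] at hFTC
  linear_combination hFTC

lemma J2 (hq : ContDiff ℝ 1 q) (hcq : HasCompactSupport q) (θ : ℝ) :
    ∫ r in Set.Ioi (0:ℝ), Fr q z r θ = -q z := by
  obtain ⟨R, hR0, hRn⟩ := exists_R hcq z
  have hint1 : IntegrableOn (fun r => Fr q z r θ) (Set.Ioi (0:ℝ)) :=
    integrableOn_Ioi_of_vanish (continuous_Fr_r z hq θ) hR0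
      (fun r hr => Fr_vanish z (hRn r θ hr))
  have htend : Tendsto (fun r : ℝ => Ff q z r θ) atTop (nhds 0) := by
    refine tendsto_const_nhds.congr' ?_
    filter_upwards [eventually_ge_atTop R] with r hr
    rw [Ff_vanish z (hRn r θ hr)]
  have hFTC := integral_Ioi_of_hasDerivAt_of_tendsto' (f' := fun r => Fr q z r θ)
    (fun r _ => hasDerivAt_Ff_r z hq r θ) hint1 htend
  rw [hFTC]
  have : Ff q z 0 θ = q z := by simp [Ff]
  rw [this, zero_sub]

lemma Ff_pi_eq (r : ℝ) : Ff q z r π = Ff q z r (-π) := by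
  rw [Ff, Ff, cc_pi, cc_neg_pi]

lemma J3 (hq : ContDiff ℝ 1 q) (r : ℝ) :
    ∫ θ in Set.Ioo (-π) π, (cc θ * ((r:ℂ) * Ft q z r θ))
      = -Complex.I * ∫ θ in Set.Ioo (-π) π, cc θ * Ff q z r θ := by
  have hd : ∀ θ : ℝ, HasDerivAt (fun θ : ℝ => cc θ * Ff q z r θ)
      (Complex.I * (cc θ * Ff q z r θ) + cc θ * ((r:ℂ) * Ft q z r θ)) θ := by
    intro θ
    have := (cc_hasDerivAt θ).fun_mul (hasDerivAt_Ff_θ z hq r θ)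
    simpa [mul_assoc] using this
  have hple : -π ≤ π := by linarith [Real.pi_pos]
  have hcont : Continuous fun θ : ℝ => Complex.I * (cc θ * Ff q z r θ)
      + cc θ * ((r:ℂ) * Ft q z r θ) := by
    have hF : Continuous (fun θ => Ff q z r θ) :=
      (continuous_Ff z hq).comp (continuous_const.prodMk continuous_id)
    have hT : Continuous (fun θ => Ft q z r θ) :=
      (continuous_Ft z hq).comp (continuous_const.prodMk continuous_id)
    exact (continuous_const.mul (continuous_cc.mul hF)).add
      (continuous_cc.mul (continuous_const.mul hT))
  have hFTC := intervalIntegral.integral_eq_sub_of_hasDerivAt (a := -π) (b := π)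
    (fun θ _ => hd θ) (hcont.intervalIntegrable _ _)
  rw [intervalIntegral.integral_of_le hple, integral_Ioc_eq_integral_Ioo] at hFTC
  rw [cc_pi, cc_neg_pi, Ff_pi_eq] at hFTC
  simp only [neg_one_mul, sub_self] at hFTC
  have hc1 : Continuous (fun θ : ℝ => Complex.I * (cc θ * Ff q z r θ)) :=
    continuous_const.mul (continuous_cc.mul
      ((continuous_Ff z hq).comp (continuous_const.prodMk continuous_id)))
  have hc2 : Continuous (fun θ : ℝ => cc θ * ((r:ℂ) * Ft q z r θ)) :=
    continuous_cc.mul (continuous_const.mul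
      ((continuous_Ft z hq).comp (continuous_const.prodMk continuous_id)))
  have hi1 : IntegrableOn (fun θ : ℝ => Complex.I * (cc θ * Ff q z r θ)) (Set.Ioo (-π) π) :=
    (hc1.integrableOn_Icc (a := -π) (b := π)).mono_set Set.Ioo_subset_Icc_self
  have hi2 : IntegrableOn (fun θ : ℝ => cc θ * ((r:ℂ) * Ft q z r θ)) (Set.Ioo (-π) π) :=
    (hc2.integrableOn_Icc (a := -π) (b := π)).mono_set Set.Ioo_subset_Icc_self
  rw [integral_add hi1 hi2, integral_const_mul] at hFTC
  linear_combination hFTC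

lemma J4 (hq : ContDiff ℝ 1 q) {r : ℝ} (hr : r ≠ 0) :
    ∫ θ in Set.Ioo (-π) π, Ft q z r θ = 0 := by
  have hple : -π ≤ π := by linarith [Real.pi_pos]
  have hcont : Continuous fun θ : ℝ => (r:ℂ) * Ft q z r θ :=
    continuous_const.mul ((continuous_Ft z hq).comp (continuous_const.prodMk continuous_id))
  have hFTC := intervalIntegral.integral_eq_sub_of_hasDerivAt (a := -π) (b := π)
    (fun θ _ => hasDerivAt_Ff_θ z hq r θ) (hcont.intervalIntegrable _ _)
  rw [intervalIntegral.integral_of_le hple, integral_Ioc_eq_integral_Ioo, Ff_pi_eq,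
    sub_self, integral_const_mul] at hFTC
  have hrc : (r:ℂ) ≠ 0 := by exact_mod_cast hr
  exact (mul_eq_zero.1 hFTC).resolve_left hrc

end Jlemmas

section Core

lemma core1 {q : ℂ → ℂ} (hq : ContDiff ℝ 1 q) (hcq : HasCompactSupport q) (z : ℂ) :
    ∫ w : ℂ, K w * dz q (z - w) = ∫ w : ℂ, K1 w * q (z - w) := by
  obtain ⟨R, hR0, hRn⟩ := exists_R hcq z
  set S : Set (ℝ × ℝ) := Set.Ioi (0:ℝ) ×ˢ Set.Ioo (-π) π with hS
  have hStarget : polarCoord.target = S := rfl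
  have hdzq : ∀ ζ : ℂ, dz q ζ = (1/2 : ℂ) * (fderiv ℝ q ζ 1 - Complex.I * fderiv ℝ q ζ Complex.I) :=
    fun ζ => rfl
  -- integrability of the basic pieces
  have hG1c : Continuous fun p : ℝ × ℝ => cc p.2 * ((p.1 : ℂ) * Fr q z p.1 p.2) :=
    (continuous_cc.comp continuous_snd).mul
      ((Complex.continuous_ofReal.comp continuous_fst).mul (continuous_Fr z hq))
  have hG2c : Continuous fun p : ℝ × ℝ => cc p.2 * ((p.1 : ℂ) * Ft q z p.1 p.2) :=
    (continuous_cc.comp continuous_snd).mul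
      ((Complex.continuous_ofReal.comp continuous_fst).mul (continuous_Ft z hq))
  have hTc : Continuous fun p : ℝ × ℝ => cc p.2 * Ff q z p.1 p.2 :=
    (continuous_cc.comp continuous_snd).mul (continuous_Ff z hq)
  have hG1int : IntegrableOn (fun p : ℝ × ℝ => cc p.2 * ((p.1 : ℂ) * Fr q z p.1 p.2)) S :=
    integrableOn_target_of_vanish hG1c hR0 fun p hp => by
      rw [Fr_vanish z (hRn p.1 p.2 hp)]; ring
  have hG2int : IntegrableOn (fun p : ℝ × ℝ => cc p.2 * ((p.1 : ℂ) * Ft q z p.1 p.2)) S :=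
    integrableOn_target_of_vanish hG2c hR0 fun p hp => by
      rw [Ft_vanish z (hRn p.1 p.2 hp)]; ring
  have hTint : IntegrableOn (fun p : ℝ × ℝ => cc p.2 * Ff q z p.1 p.2) S :=
    integrableOn_target_of_vanish hTc hR0 fun p hp => by
      rw [Ff_vanish z (hRn p.1 p.2 hp)]; ring
  set T : ℂ := ∫ p in S, cc p.2 * Ff q z p.1 p.2 with hT
  -- left-hand side
  have hL : ∫ w : ℂ, K w * dz q (z - w) = T := by
    rw [← Complex.integral_comp_polarCoord_symm (fun w => K w * dz q (z - w)), hStarget]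
    have hcongr : ∫ p in S, p.1 • (K (Complex.polarCoord.symm p) * dz q (z - Complex.polarCoord.symm p))
        = ∫ p in S, (-(1/2 : ℂ) * cc p.2 * ((p.1 : ℂ) * Fr q z p.1 p.2
            - Complex.I * ((p.1 : ℂ) * Ft q z p.1 p.2))) := by
      refine setIntegral_congr_fun (measurableSet_Ioi.prod measurableSet_Ioo) fun p hp => ?_
      have hr : p.1 ≠ 0 := ne_of_gt hp.1
      rw [polar_symm]
      exact P1 z hq hr p.2
    rw [hcongr]
    have hsplit : ∫ p in S, (-(1/2 : ℂ) * cc p.2 * ((p.1 : ℂ) * Fr q z p.1 p.2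
            - Complex.I * ((p.1 : ℂ) * Ft q z p.1 p.2)))
        = (-(1/2 : ℂ)) * (∫ p in S, cc p.2 * ((p.1 : ℂ) * Fr q z p.1 p.2))
          + ((1/2 : ℂ) * Complex.I) * (∫ p in S, cc p.2 * ((p.1 : ℂ) * Ft q z p.1 p.2)) := by
      rw [← integral_const_mul, ← integral_const_mul, ← integral_add (hG1int.const_mul _)
        (hG2int.const_mul _)]
      refine setIntegral_congr_fun (measurableSet_Ioi.prod measurableSet_Ioo) fun p _ => ?_
      ring
    rw [hsplit]
    have hpiece1 : (∫ p in S, cc p.2 * ((p.1 : ℂ) * Fr q z p.1 p.2)) = -T := by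
      rw [iterated_int_symm hG1int]
      have hinner : ∀ θ : ℝ, (∫ r in Set.Ioi (0:ℝ), cc θ * ((r : ℂ) * Fr q z r θ))
          = -∫ r in Set.Ioi (0:ℝ), cc θ * Ff q z r θ := by
        intro θ
        rw [integral_const_mul, J1 z hq hcq θ, integral_const_mul]
        ring
      rw [hT, iterated_int_symm hTint, ← integral_neg]
      refine setIntegral_congr_fun measurableSet_Ioo fun θ _ => ?_
      rw [hinner θ]
    have hpiece2 : (∫ p in S, cc p.2 * ((p.1 : ℂ) * Ft q z p.1 p.2)) = -Complex.I * T := by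
      rw [iterated_int hG2int]
      have hstep : ∀ r ∈ Set.Ioi (0:ℝ), (∫ θ in Set.Ioo (-π) π, cc θ * ((r : ℂ) * Ft q z r θ))
          = -Complex.I * ∫ θ in Set.Ioo (-π) π, cc θ * Ff q z r θ := fun r _ => J3 z hq r
      rw [setIntegral_congr_fun measurableSet_Ioi hstep, integral_const_mul, hT,
        iterated_int hTint]
    rw [hpiece1, hpiece2]
    linear_combination (-(1/2 : ℂ) * T) * Complex.I_sq
  -- right-hand side
  have hR' : ∫ w : ℂ, K1 w * q (z - w) = T := by
    rw [← Complex.integral_comp_polarCoord_symm (fun w => K1 w * q (z - w)), hStarget]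
    refine setIntegral_congr_fun (measurableSet_Ioi.prod measurableSet_Ioo) fun p hp => ?_
    have hr : p.1 ≠ 0 := ne_of_gt hp.1
    rw [polar_symm]
    exact P1' z hr p.2
  rw [hL, hR']

lemma core2 {q : ℂ → ℂ} (hq : ContDiff ℝ 1 q) (hcq : HasCompactSupport q) (z : ℂ) :
    ∫ w : ℂ, K1 w * dz q (z - w) = (Real.pi : ℂ) * q z := by
  obtain ⟨R, hR0, hRn⟩ := exists_R hcq z
  set S : Set (ℝ × ℝ) := Set.Ioi (0:ℝ) ×ˢ Set.Ioo (-π) π with hS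
  have hStarget : polarCoord.target = S := rfl
  have hFrc : Continuous fun p : ℝ × ℝ => Fr q z p.1 p.2 := continuous_Fr z hq
  have hFtc : Continuous fun p : ℝ × ℝ => Ft q z p.1 p.2 := continuous_Ft z hq
  have hFrint : IntegrableOn (fun p : ℝ × ℝ => Fr q z p.1 p.2) S :=
    integrableOn_target_of_vanish hFrc hR0 fun p hp => Fr_vanish z (hRn p.1 p.2 hp)
  have hFtint : IntegrableOn (fun p : ℝ × ℝ => Ft q z p.1 p.2) S :=
    integrableOn_target_of_vanish hFtc hR0 fun p hp => Ft_vanish z (hRn p.1 p.2 hp)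
  rw [← Complex.integral_comp_polarCoord_symm (fun w => K1 w * dz q (z - w)), hStarget]
  have hcongr : ∫ p in S, p.1 • (K1 (Complex.polarCoord.symm p) * dz q (z - Complex.polarCoord.symm p))
      = ∫ p in S, (-(1/2 : ℂ) * Fr q z p.1 p.2 + (1/2 : ℂ) * Complex.I * Ft q z p.1 p.2) := by
    refine setIntegral_congr_fun (measurableSet_Ioi.prod measurableSet_Ioo) fun p hp => ?_
    have hr : p.1 ≠ 0 := ne_of_gt hp.1
    rw [polar_symm]
    exact P2 z hq hr p.2
  rw [hcongr]
  have hsplit : ∫ p in S, (-(1/2 : ℂ) * Fr q z p.1 p.2 + (1/2 : ℂ) * Complex.I * Ft q z p.1 p.2)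
      = (-(1/2 : ℂ)) * (∫ p in S, Fr q z p.1 p.2)
        + ((1/2 : ℂ) * Complex.I) * (∫ p in S, Ft q z p.1 p.2) := by
    rw [← integral_const_mul, ← integral_const_mul, ← integral_add (hFrint.const_mul _)
      (hFtint.const_mul _)]
  rw [hsplit]
  have hpiece1 : (∫ p in S, Fr q z p.1 p.2) = (-(2 * Real.pi) : ℝ) • q z := by
    rw [iterated_int_symm hFrint]
    have : ∀ θ ∈ Set.Ioo (-π) π, (∫ r in Set.Ioi (0:ℝ), Fr q z r θ) = -q z :=
      fun θ _ => J2 z hq hcq θ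
    rw [setIntegral_congr_fun measurableSet_Ioo this, setIntegral_const]
    rw [Real.volume_real_Ioo]
    rw [max_eq_left (by linarith [Real.pi_pos])]
    rw [smul_neg, ← neg_smul]
    congr 1
    ring
  have hpiece2 : (∫ p in S, Ft q z p.1 p.2) = 0 := by
    rw [iterated_int hFtint]
    have : ∀ r ∈ Set.Ioi (0:ℝ), (∫ θ in Set.Ioo (-π) π, Ft q z r θ) = 0 :=
      fun r hr => J4 z hq (ne_of_gt hr)
    rw [setIntegral_congr_fun measurableSet_Ioi this, integral_zero]
  rw [hpiece1, hpiece2, Complex.real_smul]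
  push_cast
  ring

end Core

section Main

lemma conv_apply (p q : ℂ → ℂ) (z : ℂ) : (p ⋆[L] q) z = ∫ t, p t * q (z - t) := rfl

lemma L_flip : (L : ℂ →L[ℝ] ℂ →L[ℝ] ℂ).flip = L := by
  ext x y
  simp [mul_comm]

lemma conv_comm (p q : ℂ → ℂ) : p ⋆[L] q = q ⋆[L] p := by
  rw [← convolution_flip, L_flip]

lemma contDiffAt_K {w : ℂ} (hw : w ≠ 0) : ContDiffAt ℝ ⊤ K w := by
  have hconj : ContDiff ℝ ⊤ (fun z : ℂ => (starRingEnd ℂ) z) := by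
    have h := Complex.conjCLE.contDiff (𝕜 := ℝ) (n := ⊤)
    have he : (fun z : ℂ => (starRingEnd ℂ) z) = ⇑Complex.conjCLE := by
      funext z; exact (Complex.conjCLE_apply z).symm
    rwa [he]
  have hcw : (starRingEnd ℂ) w ≠ 0 := by simpa using hw
  have hinv : ContDiffAt ℝ ⊤ (fun z : ℂ => ((starRingEnd ℂ) z)⁻¹) w := by
    have h1 : ContDiffAt ℂ ⊤ Inv.inv ((starRingEnd ℂ) w) := contDiffAt_inv ℂ hcw
    exact (h1.restrict_scalars ℝ).comp w hconj.contDiffAt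
  have : ContDiffAt ℝ ⊤ (fun z : ℂ => z * ((starRingEnd ℂ) z)⁻¹) w :=
    contDiffAt_id.mul hinv
  refine this.congr_of_eventuallyEq ?_
  filter_upwards with z
  rw [K, div_eq_mul_inv]

end Main

end Stmt1

open Stmt1 in
/-- Let `Ω ⊂ ℂ` be open and bounded, `k ≥ 2`, and let `f` be `C^k`
(in the real sense) on the closure of `Ω`.  Then
`u(z) = (1/π) ∫_Ω f(ζ) ((z-ζ)/conj (z-ζ)) dA(ζ)` is `C^k` on `Ω` and satisfies
`∂_z² u = f` on `Ω`. -/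
theorem stmt_1 (Ω : Set ℂ) (hΩopen : IsOpen Ω) (hΩbdd : Bornology.IsBounded Ω)
    (k : ℕ) (hk : 2 ≤ k) (f : ℂ → ℂ) (hf : ContDiffOn ℝ k f (closure Ω))
    (u : ℂ → ℂ)
    (hu : ∀ z : ℂ, u z = (Real.pi : ℂ)⁻¹ *
      ∫ ζ in Ω, f ζ * ((z - ζ) / (starRingEnd ℂ) (z - ζ))) :
    ContDiffOn ℝ k u Ω ∧ ∀ z ∈ Ω, dz (dz u) z = f z := by
  have hπ : (Real.pi : ℂ) ≠ 0 := by exact_mod_cast Real.pi_ne_zero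
  have hΩmeas : MeasurableSet Ω := hΩopen.measurableSet
  have hk1 : (1 : WithTop ℕ∞) ≤ ((k : ℕ∞) : WithTop ℕ∞) := by
    exact_mod_cast (by omega : (1:ℕ) ≤ k)
  have hk2 : ((2 : ℕ∞) : WithTop ℕ∞) ≤ ((k : ℕ∞) : WithTop ℕ∞) := by exact_mod_cast hk
  obtain ⟨ρ₀, hρ₀⟩ := hΩbdd.subset_closedBall 0
  set ρ : ℝ := max ρ₀ 0 with hρdef
  have hρ : Ω ⊆ closedBall 0 ρ := hρ₀.trans (closedBall_subset_closedBall (le_max_left _ _))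
  have hρ0 : 0 ≤ ρ := le_max_right _ _
  have hfc : ContinuousOn f (closure Ω) := hf.continuousOn
  have hclcomp : IsCompact (closure Ω) :=
    Metric.isCompact_of_isClosed_isBounded isClosed_closure hΩbdd.closure
  obtain ⟨M₀, hM₀⟩ := hclcomp.exists_bound_of_continuousOn hfc
  set M : ℝ := max M₀ 0 with hMdef
  have hM : ∀ x ∈ closure Ω, ‖f x‖ ≤ M := fun x hx => (hM₀ x hx).trans (le_max_left _ _)
  have hM0 : 0 ≤ M := le_max_right _ _
  -- the main local construction
  have main : ∀ z₀ ∈ Ω, ContDiffWithinAt ℝ k u Ω z₀ ∧ dz (dz u) z₀ = f z₀ := by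
    intro z₀ hz₀
    obtain ⟨ε, hε, hball⟩ := Metric.nhds_basis_closedBall.mem_iff.1 (hΩopen.mem_nhds hz₀)
    set R₁ : ℝ := ‖z₀‖ + ρ + ε with hR₁def
    have hR₁pos : 0 < R₁ := by positivity
    -- bump functions
    set φ : ContDiffBump z₀ := ⟨ε/2, ε, by positivity, by linarith⟩ with hφdef
    set ψ : ContDiffBump (0:ℂ) := ⟨ε/8, ε/4, by positivity, by linarith⟩ with hψdef
    set χ : ContDiffBump (0:ℂ) := ⟨R₁, R₁+1, hR₁pos, by linarith⟩ with hχdef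
    -- the smooth compactly supported piece g
    set g : ℂ → ℂ := fun ζ => ((φ ζ : ℝ) : ℂ) * f ζ with hgdef
    have hsuppφ : tsupport ⇑φ ⊆ Ω := by
      rw [φ.tsupport_eq]
      exact hball
    have hg_smooth : ContDiff ℝ k g := by
      rw [contDiff_iff_contDiffAt]
      intro x
      by_cases hx : x ∈ Ω
      · have h1 : ContDiffAt ℝ k (fun ζ => ((φ ζ : ℝ) : ℂ)) x :=
          Complex.ofRealCLM.contDiff.contDiffAt.comp x
            ((φ.contDiff (n := (k:ℕ∞))).contDiffAt)
        have h2 : ContDiffAt ℝ k f x :=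
          hf.contDiffAt (mem_of_superset (hΩopen.mem_nhds hx) subset_closure)
        exact h1.mul h2
      · have hx' : x ∉ tsupport ⇑φ := fun hmem => hx (hsuppφ hmem)
        have hopen : IsOpen (tsupport ⇑φ)ᶜ := (isClosed_tsupport _).isOpen_compl
        refine contDiffAt_const (c := 0).congr_of_eventuallyEq ?_
        filter_upwards [hopen.mem_nhds hx'] with ζ hζ
        rw [hgdef]
        simp [image_eq_zero_of_notMem_tsupport hζ]
    have hcg : HasCompactSupport g := by
      have h1 : HasCompactSupport (fun ζ => ((φ ζ : ℝ) : ℂ)) := by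
        refine φ.hasCompactSupport.comp_left (g := fun t : ℝ => ((t : ℝ) : ℂ)) ?_
        simp
      exact h1.mul_right
    -- the remainder piece h
    set h : ℂ → ℂ := Ω.indicator (fun ζ => ((1 - φ ζ : ℝ) : ℂ) * f ζ) with hhdef
    have hh_cont : ContinuousOn (fun ζ => ((1 - φ ζ : ℝ) : ℂ) * f ζ) Ω := by
      refine ContinuousOn.mul ?_ (hfc.mono subset_closure)
      exact (Complex.continuous_ofReal.comp (continuous_const.sub φ.continuous)).continuousOn
    have hh_aesm : AEStronglyMeasurable h volume :=
      (aestronglyMeasurable_indicator_iff hΩmeas).2 (hh_cont.aestronglyMeasurable hΩmeas)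
    have hh_bd : ∀ ζ, ‖h ζ‖ ≤ Ω.indicator (fun _ => M) ζ := by
      intro ζ
      by_cases hζ : ζ ∈ Ω
      · rw [hhdef, Set.indicator_of_mem hζ, Set.indicator_of_mem hζ, norm_mul]
        have h1 : ‖((1 - φ ζ : ℝ) : ℂ)‖ ≤ 1 := by
          rw [Complex.norm_real, Real.norm_eq_abs, abs_le]
          constructor <;> nlinarith [φ.nonneg (x := ζ), φ.le_one (x := ζ)]
        have h2 : ‖f ζ‖ ≤ M := hM ζ (subset_closure hζ)
        nlinarith [norm_nonneg (f ζ)]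
      · rw [hhdef, Set.indicator_of_notMem hζ, Set.indicator_of_notMem hζ]
        simp
    have hh_int : Integrable h := by
      refine Integrable.mono' ?_ hh_aesm (ae_of_all _ hh_bd)
      rw [integrable_indicator_iff hΩmeas]
      exact integrableOn_const hΩbdd.measure_lt_top.ne
    have hloc_h : LocallyIntegrable h := hh_int.locallyIntegrable
    -- the truncated kernel
    set Kt : ℂ → ℂ := fun w => ((χ w : ℝ) : ℂ) * ((1 - (ψ w : ℝ) : ℂ) * K w) with hKtdef
    have hKteq : ∀ w : ℂ, ε/4 ≤ ‖w‖ → ‖w‖ ≤ R₁ → Kt w = K w := by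
      intro w h1 h2
      have hψ0 : ψ w = 0 := by
        refine ψ.zero_of_le_dist ?_
        rwa [dist_zero_right]
      have hχ1 : χ w = 1 := by
        refine χ.one_of_mem_closedBall ?_
        rwa [mem_closedBall_zero_iff]
      rw [hKtdef]
      simp only [hψ0, hχ1]
      push_cast
      ring
    have hKt_smooth : ContDiff ℝ ((⊤:ℕ∞) : WithTop ℕ∞) Kt := by
      rw [contDiff_iff_contDiffAt]
      intro w
      by_cases hw : ‖w‖ < ε/8
      · have hopen : IsOpen {w : ℂ | ‖w‖ < ε/8} := isOpen_lt continuous_norm continuous_const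
        refine contDiffAt_const (c := 0).congr_of_eventuallyEq ?_
        filter_upwards [hopen.mem_nhds hw] with w' hw'
        have hψ1 : ψ w' = 1 := by
          refine ψ.one_of_mem_closedBall ?_
          rw [mem_closedBall_zero_iff]
          exact le_of_lt hw'
        rw [hKtdef]
        simp [hψ1]
      · have hw0 : w ≠ 0 := by
          intro h0
          rw [h0, norm_zero] at hw
          exact hw (by positivity)
        have h1 : ContDiffAt ℝ ((⊤:ℕ∞) : WithTop ℕ∞) (fun w => ((χ w : ℝ) : ℂ)) w :=
          Complex.ofRealCLM.contDiff.contDiffAt.comp w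
            ((χ.contDiff (n := (⊤:ℕ∞))).contDiffAt)
        have h2 : ContDiffAt ℝ ((⊤:ℕ∞) : WithTop ℕ∞) (fun w : ℂ => (1:ℂ) - ((ψ w : ℝ) : ℂ)) w :=
          (contDiff_const.sub
            (Complex.ofRealCLM.contDiff.comp (ψ.contDiff (n := (⊤:ℕ∞))))).contDiffAt
        exact h1.mul (h2.mul ((contDiffAt_K hw0).of_le le_top))
    have hKtsupp : HasCompactSupport Kt := by
      have h1 : HasCompactSupport (fun w => ((χ w : ℝ) : ℂ)) := by
        refine χ.hasCompactSupport.comp_left (g := fun t : ℝ => ((t : ℝ) : ℂ)) ?_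
        simp
      exact h1.mul_right
    -- the annulus on which Kt = K
    set Ann : Set ℂ := {w : ℂ | ε/4 < ‖w‖ ∧ ‖w‖ < R₁} with hAnndef
    have hAnnOpen : IsOpen Ann :=
      (isOpen_lt continuous_const continuous_norm).inter
        (isOpen_lt continuous_norm continuous_const)
    have hKtK : Set.EqOn Kt K Ann := fun w hw => hKteq w (le_of_lt hw.1) (le_of_lt hw.2)
    have hdzKt_on : ∀ w ∈ Ann, dz Kt w = K1 w := by
      intro w hw
      have hw0 : w ≠ 0 := by
        intro h0
        subst h0
        have h4 : ε/4 < 0 := by simpa using hw.1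
        linarith
      rw [dz_congr_nhds (Filter.eventuallyEq_of_mem (hAnnOpen.mem_nhds hw) hKtK)]
      exact dzK hw0
    have hdz2Kt : ∀ w ∈ Ann, dz (dz Kt) w = 0 := by
      intro w hw
      have hw0 : w ≠ 0 := by
        intro h0
        subst h0
        have h4 : ε/4 < 0 := by simpa using hw.1
        linarith
      rw [dz_congr_nhds (Filter.eventuallyEq_of_mem (hAnnOpen.mem_nhds hw) hdzKt_on)]
      exact dzK1 hw0
    -- membership of the annulus
    have hAnnMem : ∀ z ∈ ball z₀ (ε/8), ∀ t : ℂ, t ∈ Ω → φ t ≠ 1 → (z - t) ∈ Ann := by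
      intro z hz t htΩ hφt
      have ht1 : ε/2 < dist t z₀ := by
        by_contra hcon
        push_neg at hcon
        exact hφt (φ.one_of_mem_closedBall (by rwa [mem_closedBall]))
      have hzd : dist z z₀ < ε/8 := mem_ball.1 hz
      have htri : dist t z₀ ≤ dist t z + dist z z₀ := dist_triangle t z z₀
      have hzt : ‖z - t‖ = dist t z := by rw [dist_comm, dist_eq_norm]
      constructor
      · rw [hzt]; linarith
      · have ht2 : ‖t‖ ≤ ρ := by
          have := hρ htΩ
          rwa [mem_closedBall_zero_iff] at this
        have : ‖z - t‖ ≤ ‖z - z₀‖ + ‖z₀‖ + ‖t‖ := by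
          have h1 : z - t = (z - z₀) + z₀ + (-t) := by ring
          rw [h1]
          refine (norm_add_le _ _).trans ?_
          have := norm_add_le (z - z₀) z₀
          simp only [norm_neg]
          linarith
        have hz8 : ‖z - z₀‖ < ε/8 := by rw [← dist_eq_norm]; exact hzd
        rw [hR₁def]
        have hε8 : ε/8 < ε := by linarith
        linarith
    -- the two convolutions
    set v₁ : ℂ → ℂ := K ⋆[L] g with hv₁def
    set v₂ : ℂ → ℂ := h ⋆[L] Kt with hv₂def
    have hv₁smooth : ContDiff ℝ k v₁ := hcg.contDiff_convolution_right L locallyIntegrable_K hg_smooth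
    have hv₂smooth : ContDiff ℝ k v₂ :=
      hKtsupp.contDiff_convolution_right L hloc_h
        (hKt_smooth.of_le (by exact_mod_cast le_top))
    set wfun : ℂ → ℂ := fun z => (Real.pi : ℂ)⁻¹ * (v₁ z + v₂ z) with hwdef
    have hw_smooth : ContDiff ℝ k wfun := contDiff_const.mul (hv₁smooth.add hv₂smooth)
    -- integrability of the split integrands
    have hg_cont : Continuous g := hg_smooth.continuous
    have hgint : Integrable g := hg_cont.integrable_of_hasCompactSupport hcg
    have hgK_int : ∀ z : ℂ, Integrable (fun ζ => g ζ * K (z - ζ)) := by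
      intro z
      have h1 : Integrable (fun ζ => K (z - ζ) * g ζ) := by
        refine hgint.bdd_mul (c := 1)
          ((measurable_K.comp (measurable_const.sub measurable_id)).aestronglyMeasurable)
          (ae_of_all _ fun ζ => norm_K_le _)
      refine h1.congr ?_
      filter_upwards with ζ
      ring
    obtain ⟨CK, hCK⟩ := hKt_smooth.continuous.norm.bounded_above_of_compact_support hKtsupp.norm
    have hhKt_int : ∀ z : ℂ, Integrable (fun ζ => h ζ * Kt (z - ζ)) := by
      intro z
      have h1 : Integrable (fun ζ => Kt (z - ζ) * h ζ) := by
        refine hh_int.bdd_mul (c := CK)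
          ((hKt_smooth.continuous.comp (continuous_const.sub continuous_id)).aestronglyMeasurable)
          (ae_of_all _ fun ζ => by simpa using hCK (z - ζ))
      refine h1.congr ?_
      filter_upwards with ζ
      ring
    -- the key local representation
    have hu_eq : ∀ z ∈ ball z₀ (ε/8), u z = wfun z := by
      intro z hz
      rw [hu z, hwdef]
      congr 1
      have hsplit : ∀ ζ : ℂ, Ω.indicator (fun ζ => f ζ * K (z - ζ)) ζ
          = g ζ * K (z - ζ) + h ζ * Kt (z - ζ) := by
        intro ζ
        by_cases hζ : ζ ∈ Ω
        · rw [Set.indicator_of_mem hζ, hhdef, Set.indicator_of_mem hζ]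
          by_cases hφζ : φ ζ = 1
          · rw [hgdef]
            simp only [hφζ]
            push_cast
            ring
          · rw [hKteq (z - ζ) (le_of_lt (hAnnMem z hz ζ hζ hφζ).1)
              (le_of_lt (hAnnMem z hz ζ hζ hφζ).2), hgdef]
            push_cast
            ring
        · have hφζ : φ ζ = 0 := by
            refine Function.notMem_support.mp fun hmem => ?_
            exact hζ (hball (ball_subset_closedBall (φ.support_eq ▸ hmem)))
          rw [Set.indicator_of_notMem hζ, hhdef, Set.indicator_of_notMem hζ, hgdef]
          simp [hφζ]
      calc ∫ ζ in Ω, f ζ * ((z - ζ) / (starRingEnd ℂ) (z - ζ))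
          = ∫ ζ, Ω.indicator (fun ζ => f ζ * K (z - ζ)) ζ := by
            rw [integral_indicator hΩmeas]
            rfl
        _ = ∫ ζ, (g ζ * K (z - ζ) + h ζ * Kt (z - ζ)) := by
            congr 1
            funext ζ
            exact hsplit ζ
        _ = (∫ ζ, g ζ * K (z - ζ)) + ∫ ζ, h ζ * Kt (z - ζ) :=
            integral_add (hgK_int z) (hhKt_int z)
        _ = v₁ z + v₂ z := by
            rw [hv₁def, hv₂def, conv_comm K g]
            rfl
    -- smoothness of u near z₀
    have hz₀ball : z₀ ∈ ball z₀ (ε/8) := mem_ball_self (by positivity)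
    have hev : u =ᶠ[nhds z₀] wfun :=
      Filter.eventuallyEq_of_mem (isOpen_ball.mem_nhds hz₀ball) hu_eq
    have hcdwa : ContDiffWithinAt ℝ k u Ω z₀ :=
      (hw_smooth.contDiffAt.congr_of_eventuallyEq hev).contDiffWithinAt
    refine ⟨hcdwa, ?_⟩
    -- now the second derivative computation
    have hg2 : ContDiff ℝ ((1:ℕ∞) + 1) g := hg_smooth.of_le (by exact_mod_cast hk)
    have hg1 : ContDiff ℝ 1 g := hg_smooth.of_le hk1
    have hdzg1 : ContDiff ℝ 1 (dz g) := contDiff_dz hg2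
    have hdzg_supp : HasCompactSupport (dz g) := hasCompactSupport_dz hcg
    have hKt2 : ContDiff ℝ ((1:ℕ∞) + 1) Kt := hKt_smooth.of_le (by exact_mod_cast le_top)
    have hKt1 : ContDiff ℝ 1 Kt := hKt_smooth.of_le (by exact_mod_cast le_top)
    have hdzKt1 : ContDiff ℝ 1 (dz Kt) := contDiff_dz hKt2
    have hdzKt_supp : HasCompactSupport (dz Kt) := hasCompactSupport_dz hKtsupp
    -- dz u = dz wfun near z₀
    have hdzu_ev : dz u =ᶠ[nhds z₀] dz wfun := by
      filter_upwards [isOpen_ball.mem_nhds hz₀ball] with z hz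
      exact dz_congr_nhds (Filter.eventuallyEq_of_mem (isOpen_ball.mem_nhds hz) hu_eq)
    have hstep1 : dz (dz u) z₀ = dz (dz wfun) z₀ := dz_congr_nhds hdzu_ev
    -- dz wfun as a function
    have hdzw : dz wfun = fun z => (Real.pi : ℂ)⁻¹ * ((K ⋆[L] dz g) z + (h ⋆[L] dz Kt) z) := by
      funext z
      rw [hwdef, dz_const_mul_add _ (hv₁smooth.differentiable (by exact_mod_cast (by omega : k ≠ 0))).differentiableAt
        (hv₂smooth.differentiable (by exact_mod_cast (by omega : k ≠ 0))).differentiableAt]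
      rw [hv₁def, hv₂def, dz_conv locallyIntegrable_K hg1 hcg z, dz_conv hloc_h hKt1 hKtsupp z]
    -- differentiability of the two new convolutions
    have hAdiff : DifferentiableAt ℝ (K ⋆[L] dz g) z₀ :=
      (hdzg_supp.hasFDerivAt_convolution_right L locallyIntegrable_K hdzg1 z₀).differentiableAt
    have hBdiff : DifferentiableAt ℝ (h ⋆[L] dz Kt) z₀ :=
      (hdzKt_supp.hasFDerivAt_convolution_right L hloc_h hdzKt1 z₀).differentiableAt
    have hstep2 : dz (dz wfun) z₀
        = (Real.pi : ℂ)⁻¹ * (dz (K ⋆[L] dz g) z₀ + dz (h ⋆[L] dz Kt) z₀) := by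
      rw [hdzw]
      exact dz_const_mul_add _ hAdiff hBdiff
    -- the g-part
    have hgpart : dz (K ⋆[L] dz g) z₀ = (Real.pi : ℂ) * g z₀ := by
      rw [dz_conv locallyIntegrable_K hdzg1 hdzg_supp z₀, conv_apply,
        core1 hdzg1 hdzg_supp z₀, core2 hg1 hcg z₀]
    -- the h-part
    have hhpart : dz (h ⋆[L] dz Kt) z₀ = 0 := by
      rw [dz_conv hloc_h hdzKt1 hdzKt_supp z₀, conv_apply]
      have hzero : (fun t => h t * dz (dz Kt) (z₀ - t)) = fun _ => 0 := by
        funext t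
        by_cases ht : h t = 0
        · rw [ht, zero_mul]
        · have htΩ : t ∈ Ω := by
            by_contra h'
            exact ht (Set.indicator_of_notMem h' _)
          have hφt : φ t ≠ 1 := by
            intro h1
            refine ht ?_
            rw [hhdef, Set.indicator_of_mem htΩ, h1]
            push_cast
            ring
          rw [hdz2Kt _ (hAnnMem z₀ hz₀ball t htΩ hφt), mul_zero]
      rw [hzero, integral_zero]
    -- conclude
    have hφz₀ : φ z₀ = 1 := φ.one_of_mem_closedBall (mem_closedBall_self (by positivity))
    rw [hstep1, hstep2, hgpart, hhpart, add_zero, hgdef]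
    simp only [hφz₀]
    push_cast
    field_simp
  exact ⟨fun z₀ hz₀ => (main z₀ hz₀).1, fun z₀ hz₀ => (main z₀ hz₀).2⟩
end

section
/- Identify ℂ with ℝ². Let Ω ⊆ ℂ be open, let μ : Ω → ℝ be twice continuously differentiable with μ > 0, and let φ : Ω → ℂ be four times continuously differentiable. Set α := μ ∂_z̄(1/μ) and β := (μ/2) ∂_z̄²(1/μ). Then P_μ(φ) = 0 in Ω if and only if ∂_z̄²∂_z²φ + α ∂_z²∂_z̄φ + β ∂_z²φ + conj(α) ∂_z∂_z̄²φ + conj(β) ∂_z̄²φ = 0 in Ω. -/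
open Matrix

/-- Wirtinger derivative `∂_z̄ w = (1/2)(∂w/∂x + i ∂w/∂y)`. -/
noncomputable def dzbar (w : ℂ → ℂ) (z : ℂ) : ℂ :=
  (1 / 2 : ℂ) * (fderiv ℝ w z 1 + Complex.I * fderiv ℝ w z Complex.I)

/-- Partial derivative `∂f/∂x_i` of a `ℂ`-valued function on `ℂ ≅ ℝ²`
(direction `1` for `i = 0`, direction `I` for `i = 1`). -/
noncomputable def pdC (i : Fin 2) (f : ℂ → ℂ) (z : ℂ) : ℂ :=
  fderiv ℝ f z (![1, Complex.I] i)

/-- Hessian matrix `∇²φ` of a `ℂ`-valued function on `ℂ ≅ ℝ²`. -/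
noncomputable def hessC (φ : ℂ → ℂ) (z : ℂ) : Matrix (Fin 2) (Fin 2) ℂ :=
  Matrix.of fun i j => pdC i (pdC j φ) z

/-- Laplacian `Δφ` of a `ℂ`-valued function on `ℂ ≅ ℝ²`. -/
noncomputable def lapC (φ : ℂ → ℂ) (z : ℂ) : ℂ := pdC 0 (pdC 0 φ) z + pdC 1 (pdC 1 φ) z

/-- Row-wise divergence of a `ℂ`-valued matrix field on `ℂ ≅ ℝ²`. -/
noncomputable def divMatC (M : ℂ → Matrix (Fin 2) (Fin 2) ℂ) (z : ℂ) (i : Fin 2) : ℂ :=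
  pdC 0 (fun w => M w i 0) z + pdC 1 (fun w => M w i 1) z

/-- Double divergence of a `ℂ`-valued matrix field on `ℂ ≅ ℝ²`. -/
noncomputable def divdivC (M : ℂ → Matrix (Fin 2) (Fin 2) ℂ) (z : ℂ) : ℂ :=
  pdC 0 (fun w => divMatC M w 0) z + pdC 1 (fun w => divMatC M w 1) z

/-- The plate-like operator `P_μ(φ) = div div((1/(2μ))(∇²φ - (Δφ/2)I₂))` on `ℂ ≅ ℝ²`,
applied to real and imaginary parts of `φ` separately. -/
noncomputable def PmuC (μ : ℂ → ℝ) (φ : ℂ → ℂ) (z : ℂ) : ℂ :=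
  divdivC (fun w => ((2 * μ w : ℝ) : ℂ)⁻¹ •
    (hessC φ w - (lapC φ w / 2) • (1 : Matrix (Fin 2) (Fin 2) ℂ))) z


lemma pdC_congr {f g : ℂ → ℂ} {z : ℂ} (i : Fin 2) (h : f =ᶠ[nhds z] g) :
    pdC i f z = pdC i g z := by
  unfold pdC; rw [h.fderiv_eq]

lemma pdC_comb {u v : ℂ → ℂ} {z : ℂ} (i : Fin 2) (a b : ℂ)
    (hu : DifferentiableAt ℝ u z) (hv : DifferentiableAt ℝ v z) :
    pdC i (fun w => a * u w + b * v w) z = a * pdC i u z + b * pdC i v z := by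
  unfold pdC
  rw [(show HasFDerivAt (fun w => a * u w + b * v w) _ z from (hu.hasFDerivAt.const_mul a).add (hv.hasFDerivAt.const_mul b)).fderiv]
  simp [smul_eq_mul]

lemma pdC_cmul {u : ℂ → ℂ} {z : ℂ} (i : Fin 2) (a : ℂ) (hu : DifferentiableAt ℝ u z) :
    pdC i (fun w => a * u w) z = a * pdC i u z := by
  unfold pdC
  rw [(hu.hasFDerivAt.const_mul a).fderiv]; simp [smul_eq_mul]

lemma pdC_sub {u v : ℂ → ℂ} {z : ℂ} (i : Fin 2)
    (hu : DifferentiableAt ℝ u z) (hv : DifferentiableAt ℝ v z) :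
    pdC i (fun w => u w - v w) z = pdC i u z - pdC i v z := by
  unfold pdC
  rw [(show HasFDerivAt (fun w => u w - v w) _ z from hu.hasFDerivAt.sub hv.hasFDerivAt).fderiv]; simp

lemma pdC_mul {u v : ℂ → ℂ} {z : ℂ} (i : Fin 2)
    (hu : DifferentiableAt ℝ u z) (hv : DifferentiableAt ℝ v z) :
    pdC i (fun w => u w * v w) z = pdC i u z * v z + u z * pdC i v z := by
  unfold pdC
  rw [(show HasFDerivAt (fun w => u w * v w) _ z from hu.hasFDerivAt.mul hv.hasFDerivAt).fderiv]
  simp [smul_eq_mul]; ring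

lemma pdC_contDiffOn {n : ℕ∞} {f : ℂ → ℂ} {Ω : Set ℂ} (hΩ : IsOpen Ω)
    (hf : ContDiffOn ℝ (n+1) f Ω) (i : Fin 2) : ContDiffOn ℝ n (pdC i f) Ω := by
  have h1 : ContDiffOn ℝ n (fderiv ℝ f) Ω := hf.fderiv_of_isOpen hΩ le_rfl
  exact (ContinuousLinearMap.apply ℝ ℂ (![1, Complex.I] i)).contDiff.comp_contDiffOn h1

lemma pdC_symm {f : ℂ → ℂ} {z : ℂ} (i j : Fin 2) (hf : ContDiffAt ℝ 2 f z) :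
    pdC i (pdC j f) z = pdC j (pdC i f) z := by
  have hd : DifferentiableAt ℝ (fderiv ℝ f) z :=
    (hf.fderiv_right (m := 1) le_rfl).differentiableAt one_ne_zero
  have key : ∀ k l : Fin 2, pdC k (pdC l f) z =
      fderiv ℝ (fderiv ℝ f) z (![1, Complex.I] k) (![1, Complex.I] l) := by
    intro k l
    unfold pdC
    have : HasFDerivAt (fun w => (fderiv ℝ f w) (![1, Complex.I] l))
        ((fderiv ℝ (fderiv ℝ f) z).flip (![1, Complex.I] l)) z := by
      exact hd.hasFDerivAt.clm_apply (hasFDerivAt_const _ _) |>.congr_fderiv (by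
        ext v; simp)
    rw [this.fderiv]; rfl
  rw [key, key, hf.isSymmSndFDerivAt (by simp [minSmoothness_of_isRCLikeNormedField])]

lemma pdC_real {f : ℂ → ℂ} (hf : ∀ w, (starRingEnd ℂ) (f w) = f w) (i : Fin 2) (z : ℂ) :
    (starRingEnd ℂ) (pdC i f z) = pdC i f z := by
  have hfr : ∀ w, f w = ((f w).re : ℂ) := by
    intro w; exact (Complex.conj_eq_iff_re.mp (hf w)).symm
  by_cases h : DifferentiableAt ℝ f z
  · have hr : DifferentiableAt ℝ (fun w => (f w).re) z := (Complex.reCLM.differentiable.differentiableAt.comp z h)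
    have : HasFDerivAt f (Complex.ofRealCLM.comp (fderiv ℝ (fun w => (f w).re) z)) z := by
      have := Complex.ofRealCLM.hasFDerivAt.comp z hr.hasFDerivAt
      exact this.congr_of_eventuallyEq (Filter.Eventually.of_forall fun w => (hfr w))
    unfold pdC
    rw [this.fderiv]
    simp [Complex.conj_ofReal]
  · unfold pdC
    rw [fderiv_zero_of_not_differentiableAt h]
    simp

noncomputable def Wc (s : ℂ) (f : ℂ → ℂ) (z : ℂ) : ℂ :=
  (1/2 : ℂ) * pdC 0 f z + (s/2) * pdC 1 f z

lemma dz_Wc : dz = Wc (-Complex.I) := by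
  funext f z; simp only [dz, Wc, pdC]; simp; ring

lemma dzbar_Wc : dzbar = Wc Complex.I := by
  funext f z; simp only [dzbar, Wc, pdC]; simp; ring

lemma pdC_add {u v : ℂ → ℂ} {z : ℂ} (i : Fin 2)
    (hu : DifferentiableAt ℝ u z) (hv : DifferentiableAt ℝ v z) :
    pdC i (fun w => u w + v w) z = pdC i u z + pdC i v z := by
  unfold pdC
  rw [(show HasFDerivAt (fun w => u w + v w) _ z from hu.hasFDerivAt.add hv.hasFDerivAt).fderiv]; simp

lemma contDiffOn_diffAt {n : ℕ∞} {f : ℂ → ℂ} {Ω : Set ℂ} (hΩ : IsOpen Ω)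
    (hf : ContDiffOn ℝ n f Ω) (hn : 1 ≤ n) {z : ℂ} (hz : z ∈ Ω) :
    DifferentiableAt ℝ f z :=
  (hf.contDiffAt (hΩ.mem_nhds hz)).differentiableAt (by exact_mod_cast (zero_lt_one.trans_le hn).ne')

lemma cd4_3 {f : ℂ → ℂ} {Ω : Set ℂ} (hΩ : IsOpen Ω) (hf : ContDiffOn ℝ 4 f Ω) (i : Fin 2) :
    ContDiffOn ℝ 3 (pdC i f) Ω := by
  have := pdC_contDiffOn (n := 3) hΩ (by exact_mod_cast hf) i
  exact_mod_cast this

lemma cd3_2 {f : ℂ → ℂ} {Ω : Set ℂ} (hΩ : IsOpen Ω) (hf : ContDiffOn ℝ 3 f Ω) (i : Fin 2) :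
    ContDiffOn ℝ 2 (pdC i f) Ω := by
  have := pdC_contDiffOn (n := 2) hΩ (by exact_mod_cast hf) i
  exact_mod_cast this

lemma cd2_1 {f : ℂ → ℂ} {Ω : Set ℂ} (hΩ : IsOpen Ω) (hf : ContDiffOn ℝ 2 f Ω) (i : Fin 2) :
    ContDiffOn ℝ 1 (pdC i f) Ω := by
  have := pdC_contDiffOn (n := 1) hΩ (by exact_mod_cast hf) i
  exact_mod_cast this

lemma pdC_congr_on {f g : ℂ → ℂ} {Ω : Set ℂ} (hΩ : IsOpen Ω) (h : Set.EqOn f g Ω)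
    {z : ℂ} (hz : z ∈ Ω) (i : Fin 2) : pdC i f z = pdC i g z :=
  pdC_congr i (Filter.eventuallyEq_of_mem (hΩ.mem_nhds hz) h)

lemma Wc_apply (s : ℂ) (f : ℂ → ℂ) (z : ℂ) :
    Wc s f z = (1/2 : ℂ) * pdC 0 f z + (s/2) * pdC 1 f z := rfl

lemma pdC_Wc {f : ℂ → ℂ} {z : ℂ} (i : Fin 2) (s : ℂ)
    (h0 : DifferentiableAt ℝ (pdC 0 f) z) (h1 : DifferentiableAt ℝ (pdC 1 f) z) :
    pdC i (Wc s f) z = (1/2 : ℂ) * pdC i (pdC 0 f) z + (s/2) * pdC i (pdC 1 f) z :=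
  pdC_comb i _ _ h0 h1

lemma Wc_contDiffOn {n : ℕ∞} {f : ℂ → ℂ} {Ω : Set ℂ} (hΩ : IsOpen Ω)
    (hf : ContDiffOn ℝ (n+1) f Ω) (s : ℂ) : ContDiffOn ℝ n (Wc s f) Ω := by
  have h0 := pdC_contDiffOn hΩ hf 0
  have h1 := pdC_contDiffOn hΩ hf 1
  exact (contDiffOn_const.mul h0).add (contDiffOn_const.mul h1)

lemma Wc_cd3 {f : ℂ → ℂ} {Ω : Set ℂ} (hΩ : IsOpen Ω) (hf : ContDiffOn ℝ 4 f Ω) (s : ℂ) :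
    ContDiffOn ℝ 3 (Wc s f) Ω := by
  have := Wc_contDiffOn (n := 3) hΩ (by exact_mod_cast hf) s
  exact_mod_cast this

lemma Wc_cd2 {f : ℂ → ℂ} {Ω : Set ℂ} (hΩ : IsOpen Ω) (hf : ContDiffOn ℝ 3 f Ω) (s : ℂ) :
    ContDiffOn ℝ 2 (Wc s f) Ω := by
  have := Wc_contDiffOn (n := 2) hΩ (by exact_mod_cast hf) s
  exact_mod_cast this

lemma Wc_Wc {f : ℂ → ℂ} {z : ℂ} (s t : ℂ)
    (h0 : DifferentiableAt ℝ (pdC 0 f) z) (h1 : DifferentiableAt ℝ (pdC 1 f) z) :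
    Wc t (Wc s f) z = (1/4 : ℂ) * pdC 0 (pdC 0 f) z + (s/4) * pdC 0 (pdC 1 f) z
      + (t/4) * pdC 1 (pdC 0 f) z + (t*s/4) * pdC 1 (pdC 1 f) z := by
  rw [Wc_apply, pdC_Wc 0 s h0 h1, pdC_Wc 1 s h0 h1]; ring

lemma pd_pd_Wc {f : ℂ → ℂ} {Ω : Set ℂ} (hΩ : IsOpen Ω) (hf : ContDiffOn ℝ 3 f Ω)
    {z : ℂ} (hz : z ∈ Ω) (i j : Fin 2) (s : ℂ) :
    pdC i (pdC j (Wc s f)) z = (1/2 : ℂ) * pdC i (pdC j (pdC 0 f)) z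
      + (s/2) * pdC i (pdC j (pdC 1 f)) z := by
  have hrep : Set.EqOn (pdC j (Wc s f))
      (fun w => (1/2 : ℂ) * pdC j (pdC 0 f) w + (s/2) * pdC j (pdC 1 f) w) Ω := fun w hw =>
    pdC_Wc j s (contDiffOn_diffAt hΩ (cd3_2 hΩ hf 0) (by norm_num) hw)
      (contDiffOn_diffAt hΩ (cd3_2 hΩ hf 1) (by norm_num) hw)
  rw [pdC_congr_on hΩ hrep hz i]
  exact pdC_comb i _ _
    (contDiffOn_diffAt hΩ (cd2_1 hΩ (cd3_2 hΩ hf 0) j) le_rfl hz)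
    (contDiffOn_diffAt hΩ (cd2_1 hΩ (cd3_2 hΩ hf 1) j) le_rfl hz)

lemma pd_pd_pd_Wc {f : ℂ → ℂ} {Ω : Set ℂ} (hΩ : IsOpen Ω) (hf : ContDiffOn ℝ 4 f Ω)
    {z : ℂ} (hz : z ∈ Ω) (i j k : Fin 2) (s : ℂ) :
    pdC i (pdC j (pdC k (Wc s f))) z = (1/2 : ℂ) * pdC i (pdC j (pdC k (pdC 0 f))) z
      + (s/2) * pdC i (pdC j (pdC k (pdC 1 f))) z := by
  have hf3 : ContDiffOn ℝ 3 f Ω := hf.of_le (by norm_num)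
  have hrep : Set.EqOn (pdC j (pdC k (Wc s f)))
      (fun w => (1/2 : ℂ) * pdC j (pdC k (pdC 0 f)) w + (s/2) * pdC j (pdC k (pdC 1 f)) w) Ω :=
    fun w hw => pd_pd_Wc hΩ hf3 hw j k s
  rw [pdC_congr_on hΩ hrep hz i]
  exact pdC_comb i _ _
    (contDiffOn_diffAt hΩ (cd2_1 hΩ (cd3_2 hΩ (cd4_3 hΩ hf 0) k) j) le_rfl hz)
    (contDiffOn_diffAt hΩ (cd2_1 hΩ (cd3_2 hΩ (cd4_3 hΩ hf 1) k) j) le_rfl hz)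

lemma pd_pd_mul {u v : ℂ → ℂ} {Ω : Set ℂ} (hΩ : IsOpen Ω)
    (hu : ContDiffOn ℝ 2 u Ω) (hv : ContDiffOn ℝ 2 v Ω) {z : ℂ} (hz : z ∈ Ω) (i j : Fin 2) :
    pdC i (pdC j (fun w => u w * v w)) z
      = pdC i (pdC j u) z * v z + pdC j u z * pdC i v z
        + pdC i u z * pdC j v z + u z * pdC i (pdC j v) z := by
  have hdu : ∀ w ∈ Ω, DifferentiableAt ℝ u w := fun w hw =>
    contDiffOn_diffAt hΩ hu (by norm_num) hw
  have hdv : ∀ w ∈ Ω, DifferentiableAt ℝ v w := fun w hw =>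
    contDiffOn_diffAt hΩ hv (by norm_num) hw
  have hdju : DifferentiableAt ℝ (pdC j u) z := contDiffOn_diffAt hΩ (cd2_1 hΩ hu j) le_rfl hz
  have hdjv : DifferentiableAt ℝ (pdC j v) z := contDiffOn_diffAt hΩ (cd2_1 hΩ hv j) le_rfl hz
  have hrep : Set.EqOn (pdC j (fun w => u w * v w))
      (fun w => pdC j u w * v w + u w * pdC j v w) Ω := fun w hw =>
    pdC_mul j (hdu w hw) (hdv w hw)
  rw [pdC_congr_on hΩ hrep hz i]
  have h1 : pdC i (fun w => pdC j u w * v w + u w * pdC j v w) z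
      = pdC i (fun w => pdC j u w * v w) z + pdC i (fun w => u w * pdC j v w) z :=
    pdC_add i (hdju.mul (hdv z hz)) ((hdu z hz).mul hdjv)
  rw [h1, pdC_mul i hdju (hdv z hz), pdC_mul i (hdu z hz) hdjv]
  ring

lemma pd_pd_sub {u v : ℂ → ℂ} {Ω : Set ℂ} (hΩ : IsOpen Ω)
    (hu : ContDiffOn ℝ 2 u Ω) (hv : ContDiffOn ℝ 2 v Ω) {z : ℂ} (hz : z ∈ Ω) (i j : Fin 2) :
    pdC i (pdC j (fun w => u w - v w)) z = pdC i (pdC j u) z - pdC i (pdC j v) z := by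
  have hrep : Set.EqOn (pdC j (fun w => u w - v w))
      (fun w => pdC j u w - pdC j v w) Ω := fun w hw =>
    pdC_sub j (contDiffOn_diffAt hΩ hu (by norm_num) hw)
      (contDiffOn_diffAt hΩ hv (by norm_num) hw)
  rw [pdC_congr_on hΩ hrep hz i]
  exact pdC_sub i (contDiffOn_diffAt hΩ (cd2_1 hΩ hu j) le_rfl hz)
    (contDiffOn_diffAt hΩ (cd2_1 hΩ hv j) le_rfl hz)

lemma pd_swapOn {f : ℂ → ℂ} {Ω : Set ℂ} (hΩ : IsOpen Ω) (hf : ContDiffOn ℝ 2 f Ω) :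
    Set.EqOn (pdC 1 (pdC 0 f)) (pdC 0 (pdC 1 f)) Ω := fun w hw =>
  pdC_symm 1 0 (hf.contDiffAt (hΩ.mem_nhds hw))

lemma eqOn_pdC {f g : ℂ → ℂ} {Ω : Set ℂ} (hΩ : IsOpen Ω) (h : Set.EqOn f g Ω) (i : Fin 2) :
    Set.EqOn (pdC i f) (pdC i g) Ω := fun w hw => pdC_congr_on hΩ h hw i

lemma pd_pd_mul_sub {u v₁ v₂ : ℂ → ℂ} {Ω : Set ℂ} (hΩ : IsOpen Ω)
    (hu : ContDiffOn ℝ 2 u Ω) (hv1 : ContDiffOn ℝ 2 v₁ Ω) (hv2 : ContDiffOn ℝ 2 v₂ Ω)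
    {z : ℂ} (hz : z ∈ Ω) (i j : Fin 2) :
    pdC i (pdC j (fun w => u w * (v₁ w - v₂ w))) z
      = pdC i (pdC j u) z * (v₁ z - v₂ z)
        + pdC j u z * (pdC i v₁ z - pdC i v₂ z)
        + pdC i u z * (pdC j v₁ z - pdC j v₂ z)
        + u z * (pdC i (pdC j v₁) z - pdC i (pdC j v₂) z) := by
  have h := pd_pd_mul (v := fun w => v₁ w - v₂ w) hΩ hu (hv1.sub hv2) hz i j
  rw [pdC_sub i (contDiffOn_diffAt hΩ hv1 (by norm_num) hz)
        (contDiffOn_diffAt hΩ hv2 (by norm_num) hz),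
      pdC_sub j (contDiffOn_diffAt hΩ hv1 (by norm_num) hz)
        (contDiffOn_diffAt hΩ hv2 (by norm_num) hz),
      pd_pd_sub hΩ hv1 hv2 hz i j] at h
  exact h

/-- With `α = μ ∂_z̄(1/μ)` and `β = (μ/2) ∂_z̄²(1/μ)`, `P_μ(φ) = 0` in
`Ω` iff `∂_z̄²∂_z²φ + α ∂_z²∂_z̄φ + β ∂_z²φ + ᾱ ∂_z∂_z̄²φ + β̄ ∂_z̄²φ = 0` in `Ω`. -/
theorem stmt_10 (Ω : Set ℂ) (hΩopen : IsOpen Ω)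
    (μ : ℂ → ℝ) (hμ : ContDiffOn ℝ 2 μ Ω) (hμpos : ∀ z ∈ Ω, 0 < μ z)
    (φ : ℂ → ℂ) (hφ : ContDiffOn ℝ 4 φ Ω)
    (α β : ℂ → ℂ)
    (hα : ∀ z, α z = (μ z : ℂ) * dzbar (fun w => ((μ w : ℂ))⁻¹) z)
    (hβ : ∀ z, β z = ((μ z : ℂ) / 2) * dzbar (dzbar (fun w => ((μ w : ℂ))⁻¹)) z) :
    (∀ z ∈ Ω, PmuC μ φ z = 0) ↔
    (∀ z ∈ Ω,
      dzbar (dzbar (dz (dz φ))) z + α z * dz (dz (dzbar φ)) z + β z * dz (dz φ) z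
        + (starRingEnd ℂ) (α z) * dz (dzbar (dzbar φ)) z
        + (starRingEnd ℂ) (β z) * dzbar (dzbar φ) z = 0) := by
  have key : ∀ z ∈ Ω,
      dzbar (dzbar (dz (dz φ))) z + α z * dz (dz (dzbar φ)) z + β z * dz (dz φ) z
        + (starRingEnd ℂ) (α z) * dz (dzbar (dzbar φ)) z
        + (starRingEnd ℂ) (β z) * dzbar (dzbar φ) z
      = ((μ z : ℂ) / 4) * PmuC μ φ z := by
    intro z hz
    have hφ3 : ContDiffOn ℝ 3 φ Ω := hφ.of_le (by norm_num)
    have hφ2 : ContDiffOn ℝ 2 φ Ω := hφ.of_le (by norm_num)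
    have hmc : ContDiffOn ℝ 2 (fun w => ((μ w : ℂ))⁻¹) Ω := by
      have h1 : ContDiffOn ℝ 2 (fun w => ((μ w : ℝ) : ℂ)) Ω :=
        Complex.ofRealCLM.contDiff.comp_contDiffOn hμ
      exact h1.inv (fun w hw => by exact_mod_cast (hμpos w hw).ne')
    have C3 : ∀ i, ContDiffOn ℝ 3 (pdC i φ) Ω := fun i => cd4_3 hΩopen hφ i
    have C2 : ∀ i j, ContDiffOn ℝ 2 (pdC i (pdC j φ)) Ω := fun i j => cd3_2 hΩopen (C3 j) i
    have Dm : ∀ w ∈ Ω, DifferentiableAt ℝ (fun w => ((μ w : ℂ))⁻¹) w := fun w hw =>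
      contDiffOn_diffAt hΩopen hmc (by norm_num) hw
    have Dm1 : ∀ i, ∀ w ∈ Ω, DifferentiableAt ℝ (pdC i (fun w => ((μ w : ℂ))⁻¹)) w := fun i w hw =>
      contDiffOn_diffAt hΩopen (cd2_1 hΩopen hmc i) le_rfl hw
    have D2 : ∀ i j, ∀ w ∈ Ω, DifferentiableAt ℝ (pdC i (pdC j φ)) w := fun i j w hw =>
      contDiffOn_diffAt hΩopen (C2 i j) (by norm_num) hw
    have cm : ∀ w, (starRingEnd ℂ) ((fun w => ((μ w : ℂ))⁻¹) w) = (fun w => ((μ w : ℂ))⁻¹) w := fun w => by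
      show (starRingEnd ℂ) (((μ w : ℂ))⁻¹) = ((μ w : ℂ))⁻¹
      rw [map_inv₀, Complex.conj_ofReal]
    have cm1 : ∀ (i : Fin 2) (w : ℂ), (starRingEnd ℂ) (pdC i (fun w => ((μ w : ℂ))⁻¹) w) = pdC i (fun w => ((μ w : ℂ))⁻¹) w :=
      fun i w => pdC_real cm i w
    have cm2 : ∀ (i j : Fin 2) (w : ℂ), (starRingEnd ℂ) (pdC i (pdC j (fun w => ((μ w : ℂ))⁻¹)) w) = pdC i (pdC j (fun w => ((μ w : ℂ))⁻¹)) w :=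
      fun i j w => pdC_real (fun w' => cm1 j w') i w
    have E2 : Set.EqOn (pdC 1 (pdC 0 φ)) (pdC 0 (pdC 1 φ)) Ω := pd_swapOn hΩopen hφ2
    have E3 : ∀ k, Set.EqOn (pdC 1 (pdC 0 (pdC k φ))) (pdC 0 (pdC 1 (pdC k φ))) Ω := fun k =>
      pd_swapOn hΩopen ((C3 k).of_le (by norm_num))
    have w2 : pdC 1 (pdC 0 φ) z = pdC 0 (pdC 1 φ) z := E2 hz
    have w3a : ∀ k, pdC 1 (pdC 0 (pdC k φ)) z = pdC 0 (pdC 1 (pdC k φ)) z := fun k => E3 k hz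
    have w3b : ∀ i, pdC i (pdC 1 (pdC 0 φ)) z = pdC i (pdC 0 (pdC 1 φ)) z := fun i =>
      eqOn_pdC hΩopen E2 i hz
    have w4a : ∀ k l, pdC 1 (pdC 0 (pdC k (pdC l φ))) z = pdC 0 (pdC 1 (pdC k (pdC l φ))) z :=
      fun k l => pd_swapOn hΩopen (C2 k l) hz
    have w4b : ∀ i k, pdC i (pdC 1 (pdC 0 (pdC k φ))) z = pdC i (pdC 0 (pdC 1 (pdC k φ))) z :=
      fun i k => eqOn_pdC hΩopen (E3 k) i hz
    have w4c : ∀ i j, pdC i (pdC j (pdC 1 (pdC 0 φ))) z = pdC i (pdC j (pdC 0 (pdC 1 φ))) z :=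
      fun i j => eqOn_pdC hΩopen (eqOn_pdC hΩopen E2 j) i hz
    have wm : pdC 1 (pdC 0 (fun w => ((μ w : ℂ))⁻¹)) z = pdC 0 (pdC 1 (fun w => ((μ w : ℂ))⁻¹)) z := pd_swapOn hΩopen hmc hz
    have hmul : (μ z : ℂ) * ((μ z : ℂ))⁻¹ = 1 := by
      have h0 : (μ z : ℂ) ≠ 0 := by exact_mod_cast (hμpos z hz).ne'
      exact mul_inv_cancel₀ h0
    have hαx : α z = (μ z : ℂ) * ((1/2 : ℂ) * pdC 0 ((fun w => ((μ w : ℂ))⁻¹)) z + (Complex.I/2) * pdC 1 ((fun w => ((μ w : ℂ))⁻¹)) z) := by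
      rw [hα z, dzbar_Wc, Wc_apply]
    have hαc : (starRingEnd ℂ) (α z) = (μ z : ℂ) * ((1/2 : ℂ) * pdC 0 ((fun w => ((μ w : ℂ))⁻¹)) z - (Complex.I/2) * pdC 1 ((fun w => ((μ w : ℂ))⁻¹)) z) := by
      rw [hαx]
      simp only [_root_.map_mul, _root_.map_add, map_div₀, _root_.map_one, map_ofNat, Complex.conj_ofReal, Complex.conj_I, cm1]
      ring
    have hβx : β z = (μ z : ℂ) / 2 * ((1/4 : ℂ) * pdC 0 (pdC 0 ((fun w => ((μ w : ℂ))⁻¹))) z + (Complex.I/4) * pdC 0 (pdC 1 ((fun w => ((μ w : ℂ))⁻¹))) z + (Complex.I/4) * pdC 0 (pdC 1 ((fun w => ((μ w : ℂ))⁻¹))) z + (Complex.I*Complex.I/4) * pdC 1 (pdC 1 ((fun w => ((μ w : ℂ))⁻¹))) z) := by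
      rw [hβ z, dzbar_Wc, Wc_Wc Complex.I Complex.I (Dm1 0 z hz) (Dm1 1 z hz), wm]
    have hβc : (starRingEnd ℂ) (β z) = (μ z : ℂ) / 2 * ((1/4 : ℂ) * pdC 0 (pdC 0 ((fun w => ((μ w : ℂ))⁻¹))) z - (Complex.I/4) * pdC 0 (pdC 1 ((fun w => ((μ w : ℂ))⁻¹))) z - (Complex.I/4) * pdC 0 (pdC 1 ((fun w => ((μ w : ℂ))⁻¹))) z + (Complex.I*Complex.I/4) * pdC 1 (pdC 1 ((fun w => ((μ w : ℂ))⁻¹))) z) := by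
      rw [hβx]
      simp only [_root_.map_mul, _root_.map_add, map_div₀, _root_.map_one, map_ofNat, Complex.conj_ofReal, Complex.conj_I, cm2]
      ring
    have hK3 : ContDiffOn ℝ 3 (Wc (-Complex.I) φ) Ω := Wc_cd3 hΩopen hφ (-Complex.I)
    have hH3 : ContDiffOn ℝ 3 (Wc Complex.I φ) Ω := Wc_cd3 hΩopen hφ Complex.I
    have hG2 : ContDiffOn ℝ 2 (Wc (-Complex.I) (Wc (-Complex.I) φ)) Ω := Wc_cd2 hΩopen hK3 (-Complex.I)
    have hT1d : ∀ j, DifferentiableAt ℝ (pdC j (Wc (-Complex.I) (Wc (-Complex.I) φ))) z := fun j =>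
      contDiffOn_diffAt hΩopen (cd2_1 hΩopen hG2 j) le_rfl hz
    have hT2d : ∀ j, DifferentiableAt ℝ (pdC j (Wc Complex.I φ)) z := fun j =>
      contDiffOn_diffAt hΩopen (cd3_2 hΩopen hH3 j) (by norm_num) hz
    have hφd : ∀ j, DifferentiableAt ℝ (pdC j φ) z := fun j =>
      contDiffOn_diffAt hΩopen (C3 j) (by norm_num) hz
    have hent00 : (fun w => (((2 * μ w : ℝ) : ℂ)⁻¹ • (hessC φ w - (lapC φ w / 2) • (1 : Matrix (Fin 2) (Fin 2) ℂ))) 0 0) = (fun w => (1/4 : ℂ) * (((μ w : ℂ))⁻¹ * (pdC 0 (pdC 0 φ) w - pdC 1 (pdC 1 φ) w))) := by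
      funext w
      simp only [Matrix.smul_apply, Matrix.sub_apply, Matrix.one_apply, hessC, lapC,
        Matrix.of_apply, smul_eq_mul]
      norm_num
      push_cast
      ring
    have hent01 : (fun w => (((2 * μ w : ℝ) : ℂ)⁻¹ • (hessC φ w - (lapC φ w / 2) • (1 : Matrix (Fin 2) (Fin 2) ℂ))) 0 1) = (fun w => (1/2 : ℂ) * (((μ w : ℂ))⁻¹ * pdC 0 (pdC 1 φ) w)) := by
      funext w
      simp only [Matrix.smul_apply, Matrix.sub_apply, Matrix.one_apply, hessC, lapC,
        Matrix.of_apply, smul_eq_mul]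
      norm_num
      push_cast
      ring
    have hent10 : (fun w => (((2 * μ w : ℝ) : ℂ)⁻¹ • (hessC φ w - (lapC φ w / 2) • (1 : Matrix (Fin 2) (Fin 2) ℂ))) 1 0) = (fun w => (1/2 : ℂ) * (((μ w : ℂ))⁻¹ * pdC 1 (pdC 0 φ) w)) := by
      funext w
      simp only [Matrix.smul_apply, Matrix.sub_apply, Matrix.one_apply, hessC, lapC,
        Matrix.of_apply, smul_eq_mul]
      norm_num
      push_cast
      ring
    have hent11 : (fun w => (((2 * μ w : ℝ) : ℂ)⁻¹ • (hessC φ w - (lapC φ w / 2) • (1 : Matrix (Fin 2) (Fin 2) ℂ))) 1 1) = (fun w => (1/4 : ℂ) * (((μ w : ℂ))⁻¹ * (pdC 1 (pdC 1 φ) w - pdC 0 (pdC 0 φ) w))) := by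
      funext w
      simp only [Matrix.smul_apply, Matrix.sub_apply, Matrix.one_apply, hessC, lapC,
        Matrix.of_apply, smul_eq_mul]
      norm_num
      push_cast
      ring
    have hP0 : PmuC μ φ z = pdC 0 (fun w => pdC 0 (fun w => (1/4 : ℂ) * (((μ w : ℂ))⁻¹ * (pdC 0 (pdC 0 φ) w - pdC 1 (pdC 1 φ) w))) w + pdC 1 (fun w => (1/2 : ℂ) * (((μ w : ℂ))⁻¹ * pdC 0 (pdC 1 φ) w)) w) z + pdC 1 (fun w => pdC 0 (fun w => (1/2 : ℂ) * (((μ w : ℂ))⁻¹ * pdC 1 (pdC 0 φ) w)) w + pdC 1 (fun w => (1/4 : ℂ) * (((μ w : ℂ))⁻¹ * (pdC 1 (pdC 1 φ) w - pdC 0 (pdC 0 φ) w))) w) z := by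
      simp only [PmuC, divdivC, divMatC]
      rw [hent00, hent01, hent10, hent11]
    have hrow0 : Set.EqOn (fun w => pdC 0 (fun w => (1/4 : ℂ) * (((μ w : ℂ))⁻¹ * (pdC 0 (pdC 0 φ) w - pdC 1 (pdC 1 φ) w))) w + pdC 1 (fun w => (1/2 : ℂ) * (((μ w : ℂ))⁻¹ * pdC 0 (pdC 1 φ) w)) w) (fun w => (1/4 : ℂ) * pdC 0 (fun w => ((μ w : ℂ))⁻¹ * (pdC 0 (pdC 0 φ) w - pdC 1 (pdC 1 φ) w)) w + (1/2 : ℂ) * pdC 1 (fun w => ((μ w : ℂ))⁻¹ * pdC 0 (pdC 1 φ) w) w) Ω := by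
      intro w hw
      show pdC 0 (fun w => (1/4 : ℂ) * (((μ w : ℂ))⁻¹ * (pdC 0 (pdC 0 φ) w - pdC 1 (pdC 1 φ) w))) w + pdC 1 (fun w => (1/2 : ℂ) * (((μ w : ℂ))⁻¹ * pdC 0 (pdC 1 φ) w)) w = (1/4 : ℂ) * pdC 0 (fun w => ((μ w : ℂ))⁻¹ * (pdC 0 (pdC 0 φ) w - pdC 1 (pdC 1 φ) w)) w + (1/2 : ℂ) * pdC 1 (fun w => ((μ w : ℂ))⁻¹ * pdC 0 (pdC 1 φ) w) w
      have h1 : pdC 0 (fun w => (1/4 : ℂ) * (((μ w : ℂ))⁻¹ * (pdC 0 (pdC 0 φ) w - pdC 1 (pdC 1 φ) w))) w = (1/4 : ℂ) * pdC 0 (fun w => ((μ w : ℂ))⁻¹ * (pdC 0 (pdC 0 φ) w - pdC 1 (pdC 1 φ) w)) w :=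
        pdC_cmul 0 _ ((Dm w hw).mul ((D2 0 0 w hw).sub (D2 1 1 w hw)))
      have h2 : pdC 1 (fun w => (1/2 : ℂ) * (((μ w : ℂ))⁻¹ * pdC 0 (pdC 1 φ) w)) w = (1/2 : ℂ) * pdC 1 (fun w => ((μ w : ℂ))⁻¹ * pdC 0 (pdC 1 φ) w) w :=
        pdC_cmul 1 _ ((Dm w hw).mul (D2 0 1 w hw))
      rw [h1, h2]
    have hrow1 : Set.EqOn (fun w => pdC 0 (fun w => (1/2 : ℂ) * (((μ w : ℂ))⁻¹ * pdC 1 (pdC 0 φ) w)) w + pdC 1 (fun w => (1/4 : ℂ) * (((μ w : ℂ))⁻¹ * (pdC 1 (pdC 1 φ) w - pdC 0 (pdC 0 φ) w))) w) (fun w => (1/2 : ℂ) * pdC 0 (fun w => ((μ w : ℂ))⁻¹ * pdC 0 (pdC 1 φ) w) w + (1/4 : ℂ) * pdC 1 (fun w => ((μ w : ℂ))⁻¹ * (pdC 1 (pdC 1 φ) w - pdC 0 (pdC 0 φ) w)) w) Ω := by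
      intro w hw
      show pdC 0 (fun w => (1/2 : ℂ) * (((μ w : ℂ))⁻¹ * pdC 1 (pdC 0 φ) w)) w + pdC 1 (fun w => (1/4 : ℂ) * (((μ w : ℂ))⁻¹ * (pdC 1 (pdC 1 φ) w - pdC 0 (pdC 0 φ) w))) w = (1/2 : ℂ) * pdC 0 (fun w => ((μ w : ℂ))⁻¹ * pdC 0 (pdC 1 φ) w) w + (1/4 : ℂ) * pdC 1 (fun w => ((μ w : ℂ))⁻¹ * (pdC 1 (pdC 1 φ) w - pdC 0 (pdC 0 φ) w)) w
      have hE : Set.EqOn (fun w => (1/2 : ℂ) * (((μ w : ℂ))⁻¹ * pdC 1 (pdC 0 φ) w)) (fun w => (1/2 : ℂ) * (((μ w : ℂ))⁻¹ * pdC 0 (pdC 1 φ) w)) Ω := by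
        intro w' hw'
        show (1/2 : ℂ) * (((μ w' : ℂ))⁻¹ * pdC 1 (pdC 0 φ) w') = (1/2 : ℂ) * (((μ w' : ℂ))⁻¹ * pdC 0 (pdC 1 φ) w')
        rw [E2 hw']
      have h0 : pdC 0 (fun w => (1/2 : ℂ) * (((μ w : ℂ))⁻¹ * pdC 1 (pdC 0 φ) w)) w = pdC 0 (fun w => (1/2 : ℂ) * (((μ w : ℂ))⁻¹ * pdC 0 (pdC 1 φ) w)) w := pdC_congr_on hΩopen hE hw 0
      have h1 : pdC 0 (fun w => (1/2 : ℂ) * (((μ w : ℂ))⁻¹ * pdC 0 (pdC 1 φ) w)) w = (1/2 : ℂ) * pdC 0 (fun w => ((μ w : ℂ))⁻¹ * pdC 0 (pdC 1 φ) w) w :=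
        pdC_cmul 0 _ ((Dm w hw).mul (D2 0 1 w hw))
      have h2 : pdC 1 (fun w => (1/4 : ℂ) * (((μ w : ℂ))⁻¹ * (pdC 1 (pdC 1 φ) w - pdC 0 (pdC 0 φ) w))) w = (1/4 : ℂ) * pdC 1 (fun w => ((μ w : ℂ))⁻¹ * (pdC 1 (pdC 1 φ) w - pdC 0 (pdC 0 φ) w)) w :=
        pdC_cmul 1 _ ((Dm w hw).mul ((D2 1 1 w hw).sub (D2 0 0 w hw)))
      rw [h0, h1, h2]
    have hR0 : pdC 0 (fun w => pdC 0 (fun w => (1/4 : ℂ) * (((μ w : ℂ))⁻¹ * (pdC 0 (pdC 0 φ) w - pdC 1 (pdC 1 φ) w))) w + pdC 1 (fun w => (1/2 : ℂ) * (((μ w : ℂ))⁻¹ * pdC 0 (pdC 1 φ) w)) w) z = pdC 0 (fun w => (1/4 : ℂ) * pdC 0 (fun w => ((μ w : ℂ))⁻¹ * (pdC 0 (pdC 0 φ) w - pdC 1 (pdC 1 φ) w)) w + (1/2 : ℂ) * pdC 1 (fun w => ((μ w : ℂ))⁻¹ * pdC 0 (pdC 1 φ) w) w) z := pdC_congr_on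 hΩopen hrow0 hz 0
    have hR1 : pdC 1 (fun w => pdC 0 (fun w => (1/2 : ℂ) * (((μ w : ℂ))⁻¹ * pdC 1 (pdC 0 φ) w)) w + pdC 1 (fun w => (1/4 : ℂ) * (((μ w : ℂ))⁻¹ * (pdC 1 (pdC 1 φ) w - pdC 0 (pdC 0 φ) w))) w) z = pdC 1 (fun w => (1/2 : ℂ) * pdC 0 (fun w => ((μ w : ℂ))⁻¹ * pdC 0 (pdC 1 φ) w) w + (1/4 : ℂ) * pdC 1 (fun w => ((μ w : ℂ))⁻¹ * (pdC 1 (pdC 1 φ) w - pdC 0 (pdC 0 φ) w)) w) z := pdC_congr_on hΩopen hrow1 hz 1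
    have hg1c : ContDiffOn ℝ 2 (fun w => ((μ w : ℂ))⁻¹ * (pdC 0 (pdC 0 φ) w - pdC 1 (pdC 1 φ) w)) Ω := hmc.mul ((C2 0 0).sub (C2 1 1))
    have hg2c : ContDiffOn ℝ 2 (fun w => ((μ w : ℂ))⁻¹ * pdC 0 (pdC 1 φ) w) Ω := hmc.mul (C2 0 1)
    have hg1rc : ContDiffOn ℝ 2 (fun w => ((μ w : ℂ))⁻¹ * (pdC 1 (pdC 1 φ) w - pdC 0 (pdC 0 φ) w)) Ω := hmc.mul ((C2 1 1).sub (C2 0 0))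
    have P1 : pdC 0 (pdC 0 (fun w => ((μ w : ℂ))⁻¹ * (pdC 0 (pdC 0 φ) w - pdC 1 (pdC 1 φ) w))) z = pdC 0 (pdC 0 ((fun w => ((μ w : ℂ))⁻¹))) z * (pdC 0 (pdC 0 φ) z - pdC 1 (pdC 1 φ) z) + pdC 0 ((fun w => ((μ w : ℂ))⁻¹)) z * (pdC 0 (pdC 0 (pdC 0 φ)) z - pdC 0 (pdC 1 (pdC 1 φ)) z) + pdC 0 ((fun w => ((μ w : ℂ))⁻¹)) z * (pdC 0 (pdC 0 (pdC 0 φ)) z - pdC 0 (pdC 1 (pdC 1 φ)) z) + ((μ z : ℂ))⁻¹ * (pdC 0 (pdC 0 (pdC 0 (pdC 0 φ))) z - pdC 0 (pdC 0 (pdC 1 (pdC 1 φ))) z) :=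
      pd_pd_mul_sub hΩopen hmc (C2 0 0) (C2 1 1) hz 0 0
    have P4 : pdC 1 (pdC 1 (fun w => ((μ w : ℂ))⁻¹ * (pdC 1 (pdC 1 φ) w - pdC 0 (pdC 0 φ) w))) z = pdC 1 (pdC 1 ((fun w => ((μ w : ℂ))⁻¹))) z * (pdC 1 (pdC 1 φ) z - pdC 0 (pdC 0 φ) z) + pdC 1 ((fun w => ((μ w : ℂ))⁻¹)) z * (pdC 1 (pdC 1 (pdC 1 φ)) z - pdC 1 (pdC 0 (pdC 0 φ)) z) + pdC 1 ((fun w => ((μ w : ℂ))⁻¹)) z * (pdC 1 (pdC 1 (pdC 1 φ)) z - pdC 1 (pdC 0 (pdC 0 φ)) z) + ((μ z : ℂ))⁻¹ * (pdC 1 (pdC 1 (pdC 1 (pdC 1 φ))) z - pdC 1 (pdC 1 (pdC 0 (pdC 0 φ))) z) :=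
      pd_pd_mul_sub hΩopen hmc (C2 1 1) (C2 0 0) hz 1 1
    have P2 : pdC 0 (pdC 1 (fun w => ((μ w : ℂ))⁻¹ * pdC 0 (pdC 1 φ) w)) z = pdC 0 (pdC 1 ((fun w => ((μ w : ℂ))⁻¹))) z * pdC 0 (pdC 1 φ) z + pdC 1 ((fun w => ((μ w : ℂ))⁻¹)) z * pdC 0 (pdC 0 (pdC 1 φ)) z + pdC 0 ((fun w => ((μ w : ℂ))⁻¹)) z * pdC 1 (pdC 0 (pdC 1 φ)) z + ((μ z : ℂ))⁻¹ * pdC 0 (pdC 1 (pdC 0 (pdC 1 φ))) z :=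
      pd_pd_mul hΩopen hmc (C2 0 1) hz 0 1
    have P3 : pdC 1 (pdC 0 (fun w => ((μ w : ℂ))⁻¹ * pdC 0 (pdC 1 φ) w)) z = pdC 1 (pdC 0 ((fun w => ((μ w : ℂ))⁻¹))) z * pdC 0 (pdC 1 φ) z + pdC 0 ((fun w => ((μ w : ℂ))⁻¹)) z * pdC 1 (pdC 0 (pdC 1 φ)) z + pdC 1 ((fun w => ((μ w : ℂ))⁻¹)) z * pdC 0 (pdC 0 (pdC 1 φ)) z + ((μ z : ℂ))⁻¹ * pdC 1 (pdC 0 (pdC 0 (pdC 1 φ))) z :=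
      pd_pd_mul hΩopen hmc (C2 0 1) hz 1 0
    rw [hαc, hβc, hαx, hβx, dz_Wc, dzbar_Wc]
    rw [Wc_Wc Complex.I Complex.I (hT1d 0) (hT1d 1), Wc_Wc (-Complex.I) (-Complex.I) (hT2d 0) (hT2d 1),
        Wc_Wc Complex.I (-Complex.I) (hT2d 0) (hT2d 1), Wc_Wc (-Complex.I) (-Complex.I) (hφd 0) (hφd 1),
        Wc_Wc Complex.I Complex.I (hφd 0) (hφd 1)]
    rw [pd_pd_Wc hΩopen hK3 hz 0 0 (-Complex.I), pd_pd_Wc hΩopen hK3 hz 0 1 (-Complex.I), pd_pd_Wc hΩopen hK3 hz 1 0 (-Complex.I), pd_pd_Wc hΩopen hK3 hz 1 1 (-Complex.I)]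
    rw [pd_pd_Wc hΩopen hφ3 hz 0 0 Complex.I, pd_pd_Wc hΩopen hφ3 hz 0 1 Complex.I, pd_pd_Wc hΩopen hφ3 hz 1 0 Complex.I, pd_pd_Wc hΩopen hφ3 hz 1 1 Complex.I]
    rw [pd_pd_pd_Wc hΩopen hφ hz 0 0 0 (-Complex.I),
      pd_pd_pd_Wc hΩopen hφ hz 0 0 1 (-Complex.I),
      pd_pd_pd_Wc hΩopen hφ hz 0 1 0 (-Complex.I),
      pd_pd_pd_Wc hΩopen hφ hz 0 1 1 (-Complex.I),
      pd_pd_pd_Wc hΩopen hφ hz 1 0 0 (-Complex.I),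
      pd_pd_pd_Wc hΩopen hφ hz 1 0 1 (-Complex.I),
      pd_pd_pd_Wc hΩopen hφ hz 1 1 0 (-Complex.I),
      pd_pd_pd_Wc hΩopen hφ hz 1 1 1 (-Complex.I)]
    rw [hP0, hR0, hR1]
    rw [pdC_comb 0 (1/4 : ℂ) (1/2 : ℂ)
        (contDiffOn_diffAt hΩopen (cd2_1 hΩopen hg1c 0) le_rfl hz)
        (contDiffOn_diffAt hΩopen (cd2_1 hΩopen hg2c 1) le_rfl hz),
        pdC_comb 1 (1/2 : ℂ) (1/4 : ℂ)
        (contDiffOn_diffAt hΩopen (cd2_1 hΩopen hg2c 0) le_rfl hz)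
        (contDiffOn_diffAt hΩopen (cd2_1 hΩopen hg1rc 1) le_rfl hz)]
    rw [P1, P2, P3, P4]
    simp only [w2, w3a, w3b, w4a, w4b, w4c, wm]
    linear_combination (-(1/16 : ℂ) * (pdC 0 (pdC 0 (pdC 0 (pdC 0 (φ)))) z + 2 * pdC 0 (pdC 0 (pdC 1 (pdC 1 (φ)))) z + pdC 1 (pdC 1 (pdC 1 (pdC 1 (φ)))) z)) * hmul + (((1/16 : ℂ) * (((μ z : ℝ) : ℂ)) * (pdC 0 (pdC 0 (fun w => ((μ w : ℂ))⁻¹)) z) * (pdC 1 (pdC 1 φ) z) + (-1/4 : ℂ) * (((μ z : ℝ) : ℂ)) * (pdC 0 (pdC 1 (fun w => ((μ w : ℂ))⁻¹)) z) * (pdC 0 (pdC 1 φ) z) + (1/16 : ℂ) * (((μ z : ℝ) : ℂ)) * (pdC 1 (pdC 1 (fun w => ((μ w : ℂ))⁻¹)) z) * (pdC 0 (pdC 0 φ) z) + (-1/16 : ℂ) * (((μ z : ℝ) : ℂ)) * (pdC 1 (pdC 1 (fun w => ((μ w : ℂ))⁻¹)) z) * (pdC 1 (pdC 1 φ) z)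 + (-1/8 : ℂ) * (((μ z : ℝ) : ℂ)) * (pdC 0 (fun w => ((μ w : ℂ))⁻¹) z) * (pdC 0 (pdC 1 (pdC 1 φ)) z) + (-1/8 : ℂ) * (((μ z : ℝ) : ℂ)) * (pdC 1 (fun w => ((μ w : ℂ))⁻¹) z) * (pdC 0 (pdC 0 (pdC 1 φ)) z) + (-1/8 : ℂ) * (((μ z : ℝ) : ℂ)) * (pdC 1 (fun w => ((μ w : ℂ))⁻¹) z) * (pdC 1 (pdC 1 (pdC 1 φ)) z) + (-1/8 : ℂ) * (pdC 0 (pdC 0 (pdC 1 (pdC 1 φ))) z) + (-1/16 : ℂ) * (pdC 1 (pdC 1 (pdC 1 (pdC 1 φ))) z)) + ((1/16 : ℂ) * (((μ z : ℝ) : ℂ)) * (pdC 1 (pdC 1 (fun w => ((μ w : ℂ))⁻¹)) z) * (pdC 1 (pdC 1 φ) z) * Complex.I * Complex.I + (1/8 : ℂ) * (((μ z : ℝ) : ℂ)) * (pdC 1 (fun w => ((μ w : ℂ))⁻¹) z) * (pdC 1 (pdC 1 (pdC 1 φ)) z) * Complex.I * Complex.I + (1/16 : ℂ) * (pdC 1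 (pdC 1 (pdC 1 (pdC 1 φ))) z) * Complex.I * Complex.I)) * Complex.I_mul_I
  constructor
  · intro h z hz
    rw [key z hz, h z hz, mul_zero]
  · intro h z hz
    have h2 := h z hz
    rw [key z hz] at h2
    have hμ0 : ((μ z : ℂ) / 4) ≠ 0 := by
      have : (μ z : ℂ) ≠ 0 := by exact_mod_cast (hμpos z hz).ne'
      simp [this]
    exact (mul_eq_zero.mp h2).resolve_left hμ0
end
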